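/- arXiv:1408.0056 — 4 statements merged into one kernel-verified Lean document; each statement's English description precedes it below -/
import Mathlib

section
/- If M is a nonzero Dedekind finite right R-module that has couniserial dimension, then M is a finite direct sum of indecomposable submodules. -/
universe u v w

/-- A module is *uniform* if it is nonzero and any two nonzero submodules intersect
nontrivially. -/
def IsUniformModule (R : Type u) [Ring R] (M : Type v) [AddCommGroup M] [Module R M] : Prop :=
  Nontrivial M ∧ ∀ N₁ N₂ : Submodule R M, N₁ ≠ ⊥ → N₂ ≠ ⊥ → N₁ ⊓ N₂ ≠ ⊥

/-- The classes `ζ_α`, defined by transfinite induction: `ζ_1` is the class of uniform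
modules, and for `α > 1`, `M ∈ ζ_α` iff every nonzero submodule `N` of `M` with `N ≇ M`
lies in `ζ_β` for some `β < α`. -/
def ModuleZeta (R : Type u) [Ring R] (α : Ordinal.{v}) (M : Type v) [AddCommGroup M]
    [Module R M] : Prop :=
  (α = 1 ∧ IsUniformModule R M) ∨
    (1 < α ∧ ∀ N : Submodule R M, N ≠ ⊥ → ¬ Nonempty (N ≃ₗ[R] M) →
      ∃ β, ∃ _ : β < α, ModuleZeta R β N)
termination_by α

/-- A module has couniserial dimension iff it lies in `ζ_α` for some ordinal `α`. -/
def HasCUDim (R : Type u) [Ring R] (M : Type v) [AddCommGroup M] [Module R M] : Prop :=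
  ∃ α : Ordinal.{v}, ModuleZeta R α M

open Classical in
/-- The couniserial dimension of a module: the least `α` with `M ∈ ζ_α`, with the
convention that the zero module has couniserial dimension `0`. -/
noncomputable def cuDim (R : Type u) [Ring R] (M : Type v) [AddCommGroup M] [Module R M] :
    Ordinal.{v} :=
  if Subsingleton M then 0 else sInf {α | ModuleZeta R α M}

/-- A submodule is *essential* if it meets every nonzero submodule nontrivially. -/
def IsEssentialSubmodule (R : Type u) [Ring R] {M : Type v} [AddCommGroup M] [Module R M]
    (N : Submodule R M) : Prop :=
  ∀ K : Submodule R M, K ≠ ⊥ → N ⊓ K ≠ ⊥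

/-- A module is *indecomposable* if it is nonzero and is not an (internal) direct sum of two
nonzero submodules. -/
def IsIndecomposableModule (R : Type u) [Ring R] (M : Type v) [AddCommGroup M]
    [Module R M] : Prop :=
  Nontrivial M ∧ ∀ A B : Submodule R M, IsCompl A B → A = ⊥ ∨ B = ⊥

/-- A module is *coHopfian* if it is not isomorphic to a proper submodule of itself. -/
def IsCoHopfianModule (R : Type u) [Ring R] (M : Type v) [AddCommGroup M] [Module R M] : Prop :=
  ∀ N : Submodule R M, Nonempty (M ≃ₗ[R] N) → N = ⊤

/-- A module is *fully coHopfian* if every submodule is coHopfian. -/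
def IsFullyCoHopfianModule (R : Type u) [Ring R] (M : Type v) [AddCommGroup M]
    [Module R M] : Prop :=
  ∀ N : Submodule R M, IsCoHopfianModule R N

/-- A module `N` has the *cancellation property* if `N ⊕ A ≅ N ⊕ B` implies `A ≅ B`. -/
def HasCancellation (R : Type u) [Ring R] (N : Type v) [AddCommGroup N] [Module R N] : Prop :=
  ∀ (A B : Type v) [AddCommGroup A] [Module R A] [AddCommGroup B] [Module R B],
    Nonempty ((N × A) ≃ₗ[R] (N × B)) → Nonempty (A ≃ₗ[R] B)

/-- A module is *Dedekind finite* if it is not isomorphic to a proper direct summand of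
itself. -/
def IsDedekindFiniteModule (R : Type u) [Ring R] (M : Type v) [AddCommGroup M]
    [Module R M] : Prop :=
  ∀ A B : Submodule R M, IsCompl A B → Nonempty (M ≃ₗ[R] A) → B = ⊥

/-- A ring is *semiprime* if it has no nonzero nilpotent two-sided ideal; equivalently,
`a R a = 0` implies `a = 0`. -/
def IsSemiprimeRing (R : Type u) [Ring R] : Prop :=
  ∀ a : R, (∀ x : R, a * x * a = 0) → a = 0

/-- An ideal is an *annihilator ideal* if it is the annihilator of a subset of the ring. -/
def IsAnnihilatorIdeal (R : Type u) [Ring R] (I : Ideal R) : Prop :=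
  ∃ S : Set R, (I : Set R) = {x : R | ∀ s ∈ S, x * s = 0}

/-- A module has *uniform dimension `n`* if it contains `n` independent uniform submodules
whose direct sum is essential. -/
def HasFiniteUniformDim (R : Type u) [Ring R] (M : Type v) [AddCommGroup M] [Module R M]
    (n : ℕ) : Prop :=
  ∃ U : Fin n → Submodule R M, iSupIndep U ∧ (∀ i, IsUniformModule R (U i)) ∧
    IsEssentialSubmodule R (⨆ i, U i)

/-- A ring is *Goldie* if it has the ascending chain condition on annihilator ideals and
finite uniform dimension as a module over itself. -/
def IsGoldieRing (R : Type u) [Ring R] : Prop :=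
  (∀ f : ℕ → Ideal R, (∀ n, IsAnnihilatorIdeal R (f n)) → Monotone f →
      ∃ n, ∀ k, n ≤ k → f k = f n) ∧
    ∃ n : ℕ, HasFiniteUniformDim R R n


section StmtElevenAux

variable {R : Type u} [Ring R]

private lemma indec_congr {M M' : Type v} [AddCommGroup M] [Module R M] [AddCommGroup M']
    [Module R M'] (e : M ≃ₗ[R] M') (h : IsIndecomposableModule R M) :
    IsIndecomposableModule R M' := by
  obtain ⟨hnt, hind⟩ := h
  refine ⟨e.symm.toEquiv.nontrivial, fun A B hAB => ?_⟩
  have o : Submodule R M ≃o Submodule R M' := Submodule.orderIsoMapComap e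
  rcases hind (o.symm A) (o.symm B) (o.symm.isCompl hAB) with h2 | h2
  · left
    have := congrArg o h2
    rwa [o.apply_symm_apply, o.map_bot] at this
  · right
    have := congrArg o h2
    rwa [o.apply_symm_apply, o.map_bot] at this

private lemma uniform_indec {M : Type v} [AddCommGroup M] [Module R M]
    (h : IsUniformModule R M) : IsIndecomposableModule R M := by
  obtain ⟨hnt, hu⟩ := h
  refine ⟨hnt, fun A B hAB => ?_⟩
  by_contra hc
  push_neg at hc
  exact hu A B hc.1 hc.2 (disjoint_iff.mp hAB.disjoint)

private lemma indec_decomp {M : Type v} [AddCommGroup M] [Module R M]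
    (h : IsIndecomposableModule R M) :
    ∃ (n : ℕ) (N : Fin n → Submodule R M),
      DirectSum.IsInternal N ∧ ∀ i, IsIndecomposableModule R (N i) := by
  refine ⟨1, fun _ => ⊤, ?_, fun _ => indec_congr Submodule.topEquiv.symm h⟩
  rw [DirectSum.isInternal_submodule_iff_iSupIndep_and_iSup_eq_top]
  constructor
  · intro i
    have : (⨆ j, ⨆ _ : j ≠ i, (⊤ : Submodule R M)) ≤ ⊥ :=
      iSup_le fun j => iSup_le fun hj => absurd (Subsingleton.elim j i) hj
    rw [le_bot_iff] at this
    rw [this]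
    exact disjoint_bot_right
  · exact iSup_const

/-- The coprod of subtypes of disjoint submodules is injective. -/
private lemma coprod_inj {M : Type v} [AddCommGroup M] [Module R M] {P Q : Submodule R M}
    (h : Disjoint P Q) : Function.Injective ⇑(P.subtype.coprod Q.subtype) := by
  rw [← LinearMap.ker_eq_bot]
  rw [Submodule.eq_bot_iff]
  rintro ⟨x, y⟩ hxy
  simp only [LinearMap.mem_ker, LinearMap.coprod_apply, Submodule.coe_subtype] at hxy
  have hx : (x : M) ∈ P ⊓ Q := by
    refine ⟨x.2, ?_⟩
    have : (x : M) = -(y : M) := eq_neg_of_add_eq_zero_left hxy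
    rw [this]; exact neg_mem y.2
  rw [disjoint_iff.mp h] at hx
  have hx0 : (x : M) = 0 := hx
  have hy0 : (y : M) = 0 := by rw [hx0] at hxy; simpa using hxy
  ext <;> simp [hx0, hy0]

/-- A linear equiv from the product onto the sup of disjoint submodules. -/
private noncomputable def supEquiv {M : Type v} [AddCommGroup M] [Module R M]
    {P Q : Submodule R M} (h : Disjoint P Q) : (P × Q) ≃ₗ[R] ↥(P ⊔ Q) :=
  (LinearEquiv.ofInjective _ (coprod_inj h)).trans
    (LinearEquiv.ofEq _ _ (Submodule.sup_eq_range P Q).symm)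

/-- A direct summand of a Dedekind finite module is Dedekind finite. -/
private lemma df_summand {M : Type v} [AddCommGroup M] [Module R M]
    (hdf : IsDedekindFiniteModule R M) {A B : Submodule R M} (hAB : IsCompl A B) :
    IsDedekindFiniteModule R ↥A := by
  intro A₁ C hcompl ⟨e⟩
  have hsub : Function.Injective ⇑A.subtype := A.injective_subtype
  set A₁' := A₁.map A.subtype with hA₁'
  set C' := C.map A.subtype with hC'
  have hA₁'le : A₁' ≤ A := Submodule.map_subtype_le A A₁
  have hC'le : C' ≤ A := Submodule.map_subtype_le A C
  have hdisj : Disjoint A₁' B := hAB.disjoint.mono_left hA₁'le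
  have e2 : (A : Type v) ≃ₗ[R] ↥A₁' := e.trans (Submodule.equivMapOfInjective A.subtype hsub A₁)
  have e0 : M ≃ₗ[R] ↥(A₁' ⊔ B) :=
    ((Submodule.prodEquivOfIsCompl A B hAB).symm.trans
      (e2.prodCongr (LinearEquiv.refl R ↥B))).trans (supEquiv hdisj)
  have hinfA : (A₁' ⊔ B) ⊓ A = A₁' := by
    rw [sup_inf_assoc_of_le B hA₁'le, disjoint_iff.mp hAB.disjoint.symm, sup_bot_eq]
  have hAC : A₁' ⊓ C' = ⊥ := by
    rw [← Submodule.map_inf _ hsub, disjoint_iff.mp hcompl.disjoint, Submodule.map_bot]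
  have hcompl' : IsCompl (A₁' ⊔ B) C' := by
    constructor
    · rw [disjoint_iff]
      have h1 : (A₁' ⊔ B) ⊓ C' ≤ A₁' ⊓ C' :=
        le_inf (le_trans (inf_le_inf_left _ hC'le) hinfA.le) inf_le_right
      rw [hAC] at h1
      exact le_bot_iff.mp h1
    · rw [codisjoint_iff, sup_right_comm, ← Submodule.map_sup,
        codisjoint_iff.mp hcompl.codisjoint, Submodule.map_top, Submodule.range_subtype,
        codisjoint_iff.mp hAB.codisjoint]
  have hC'bot : C' = ⊥ := hdf (A₁' ⊔ B) C' hcompl' ⟨e0⟩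
  have : C.map A.subtype = (⊥ : Submodule R ↥A).map A.subtype := by
    rw [Submodule.map_bot]; exact hC'bot
  exact Submodule.map_injective_of_injective hsub this

/-- Push an internal decomposition of a submodule into the ambient module. -/
private lemma map_decomp {M : Type v} [AddCommGroup M] [Module R M] {A : Submodule R M} {n : ℕ}
    {N : Fin n → Submodule R ↥A} (hN : DirectSum.IsInternal N)
    (hNind : ∀ i, IsIndecomposableModule R ↥(N i)) :
    iSupIndep (fun i => (N i).map A.subtype) ∧ (⨆ i, (N i).map A.subtype) = A ∧
      ∀ i, IsIndecomposableModule R ↥((N i).map A.subtype) := by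
  have hsub : Function.Injective ⇑A.subtype := A.injective_subtype
  rw [DirectSum.isInternal_submodule_iff_iSupIndep_and_iSup_eq_top] at hN
  obtain ⟨hind, hsup⟩ := hN
  refine ⟨?_, ?_, fun i => indec_congr (Submodule.equivMapOfInjective A.subtype hsub (N i))
    (hNind i)⟩
  · intro i
    rw [disjoint_iff]
    have : (⨆ j, ⨆ _ : j ≠ i, (N j).map A.subtype) = ((⨆ j, ⨆ _ : j ≠ i, N j)).map A.subtype := by
      simp [Submodule.map_iSup]
    rw [this, ← Submodule.map_inf _ hsub, disjoint_iff.mp (hind i), Submodule.map_bot]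
  · rw [← Submodule.map_iSup, hsup, Submodule.map_top, Submodule.range_subtype]

/-- Modular-lattice helper. -/
private lemma disj_helper {M : Type v} [AddCommGroup M] [Module R M] {A B X a : Submodule R M}
    (hAB : Disjoint A B) (ha : a ≤ A) (hX : X ≤ A) (h : Disjoint a X) :
    Disjoint a (X ⊔ B) := by
  rw [disjoint_iff]
  have hinfA : (X ⊔ B) ⊓ A = X := by
    rw [sup_inf_assoc_of_le B hX, disjoint_iff.mp hAB.symm, sup_bot_eq]
  have h1 : a ⊓ (X ⊔ B) ≤ a ⊓ X :=
    le_inf inf_le_left (le_trans (le_inf inf_le_right (le_trans inf_le_left ha)) hinfA.le)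
  rw [disjoint_iff.mp h] at h1
  exact le_bot_iff.mp h1

private lemma combine_decomp {M : Type v} [AddCommGroup M] [Module R M] {A B : Submodule R M}
    (hAB : IsCompl A B)
    (hA : ∃ (n : ℕ) (N : Fin n → Submodule R ↥A),
      DirectSum.IsInternal N ∧ ∀ i, IsIndecomposableModule R ↥(N i))
    (hB : ∃ (m : ℕ) (K : Fin m → Submodule R ↥B),
      DirectSum.IsInternal K ∧ ∀ i, IsIndecomposableModule R ↥(K i)) :
    ∃ (n : ℕ) (N : Fin n → Submodule R M),
      DirectSum.IsInternal N ∧ ∀ i, IsIndecomposableModule R (N i) := by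
  obtain ⟨n, N, hN, hNi⟩ := hA
  obtain ⟨m, K, hK, hKi⟩ := hB
  obtain ⟨hNind, hNsup, hNindec⟩ := map_decomp hN hNi
  obtain ⟨hKind, hKsup, hKindec⟩ := map_decomp hK hKi
  set N' : Fin n → Submodule R M := fun i => (N i).map A.subtype with hN'
  set K' : Fin m → Submodule R M := fun i => (K i).map B.subtype with hK'
  have hN'le : ∀ i, N' i ≤ A := fun i => Submodule.map_subtype_le A (N i)
  have hK'le : ∀ i, K' i ≤ B := fun i => Submodule.map_subtype_le B (K i)
  refine ⟨n + m, Fin.append N' K', ?_, ?_⟩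
  · rw [DirectSum.isInternal_submodule_iff_iSupIndep_and_iSup_eq_top]
    constructor
    · intro i
      refine Fin.addCases (motive := fun i =>
        Disjoint (Fin.append N' K' i) (⨆ j, ⨆ _ : j ≠ i, Fin.append N' K' j)) ?_ ?_ i
      · intro i₀
        rw [Fin.append_left]
        have hle : (⨆ j, ⨆ _ : j ≠ Fin.castAdd m i₀, Fin.append N' K' j) ≤
            (⨆ j₀, ⨆ _ : j₀ ≠ i₀, N' j₀) ⊔ B := by
          refine iSup_le fun j => iSup_le ?_
          refine Fin.addCases (motive := fun j => j ≠ Fin.castAdd m i₀ →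
            Fin.append N' K' j ≤ (⨆ j₀, ⨆ _ : j₀ ≠ i₀, N' j₀) ⊔ B) ?_ ?_ j
          · intro j₀ hj
            have hj' : j₀ ≠ i₀ := fun h => hj (by rw [h])
            rw [Fin.append_left]
            exact le_trans (le_iSup₂ (f := fun j (_ : j ≠ i₀) => N' j) j₀ hj') le_sup_left
          · intro j₁ _
            rw [Fin.append_right]
            exact le_trans (hK'le j₁) le_sup_right
        refine Disjoint.mono_right hle ?_
        exact disj_helper hAB.disjoint (hN'le i₀)
          (iSup_le fun j₀ => iSup_le fun _ => hN'le j₀) (hNind i₀)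
      · intro i₁
        rw [Fin.append_right]
        have hle : (⨆ j, ⨆ _ : j ≠ Fin.natAdd n i₁, Fin.append N' K' j) ≤
            (⨆ j₁, ⨆ _ : j₁ ≠ i₁, K' j₁) ⊔ A := by
          refine iSup_le fun j => iSup_le ?_
          refine Fin.addCases (motive := fun j => j ≠ Fin.natAdd n i₁ →
            Fin.append N' K' j ≤ (⨆ j₁, ⨆ _ : j₁ ≠ i₁, K' j₁) ⊔ A) ?_ ?_ j
          · intro j₀ _
            rw [Fin.append_left]
            exact le_trans (hN'le j₀) le_sup_right
          · intro j₁ hj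
            have hj' : j₁ ≠ i₁ := fun h => hj (by rw [h])
            rw [Fin.append_right]
            exact le_trans (le_iSup₂ (f := fun j (_ : j ≠ i₁) => K' j) j₁ hj') le_sup_left
        refine Disjoint.mono_right hle ?_
        exact disj_helper hAB.disjoint.symm (hK'le i₁)
          (iSup_le fun j₁ => iSup_le fun _ => hK'le j₁) (hKind i₁)
    · rw [eq_top_iff, ← codisjoint_iff.mp hAB.codisjoint]
      refine sup_le ?_ ?_
      · rw [← hNsup]
        refine iSup_le fun i₀ => ?_
        rw [show N' i₀ = Fin.append N' K' (Fin.castAdd m i₀) from (Fin.append_left N' K' i₀).symm]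
        exact le_iSup _ _
      · rw [← hKsup]
        refine iSup_le fun i₁ => ?_
        rw [show K' i₁ = Fin.append N' K' (Fin.natAdd n i₁) from (Fin.append_right N' K' i₁).symm]
        exact le_iSup _ _
  · intro i
    refine Fin.addCases (motive := fun i => IsIndecomposableModule R ↥(Fin.append N' K' i))
      ?_ ?_ i
    · intro i₀; rw [Fin.append_left]; exact hNindec i₀
    · intro i₁; rw [Fin.append_right]; exact hKindec i₁

/-- Main induction: a nontrivial Dedekind finite module in `ζ_α` is a finite direct sum of
indecomposables. -/
private lemma key_induction (α : Ordinal.{v}) :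
    ∀ (M : Type v) [AddCommGroup M] [Module R M], Nontrivial M →
      IsDedekindFiniteModule R M → ModuleZeta R α M →
      ∃ (n : ℕ) (N : Fin n → Submodule R M),
        DirectSum.IsInternal N ∧ ∀ i, IsIndecomposableModule R (N i) := by
  induction α using Ordinal.induction with
  | _ α ih =>
  intro M _ _ hnt hdf hz
  rw [ModuleZeta] at hz
  rcases hz with ⟨-, hu⟩ | ⟨hα, hz⟩
  · exact indec_decomp (uniform_indec hu)
  · by_cases hind : IsIndecomposableModule R M
    · exact indec_decomp hind
    · have hdec : ∃ A B : Submodule R M, IsCompl A B ∧ A ≠ ⊥ ∧ B ≠ ⊥ := by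
        rw [IsIndecomposableModule, not_and] at hind
        have := hind hnt
        push_neg at this
        obtain ⟨A, B, hAB, h1, h2⟩ := this
        exact ⟨A, B, hAB, h1, h2⟩
      obtain ⟨A, B, hAB, hA0, hB0⟩ := hdec
      have hAne : ¬ Nonempty (↥A ≃ₗ[R] M) := by
        rintro ⟨e⟩
        exact hB0 (hdf A B hAB ⟨e.symm⟩)
      have hBne : ¬ Nonempty (↥B ≃ₗ[R] M) := by
        rintro ⟨e⟩
        exact hA0 (hdf B A hAB.symm ⟨e.symm⟩)
      obtain ⟨β, hβ, hzA⟩ := hz A hA0 hAne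
      obtain ⟨γ, hγ, hzB⟩ := hz B hB0 hBne
      have hntA : Nontrivial ↥A := Submodule.nontrivial_iff_ne_bot.mpr hA0
      have hntB : Nontrivial ↥B := Submodule.nontrivial_iff_ne_bot.mpr hB0
      exact combine_decomp hAB
        (ih β hβ ↥A hntA (df_summand hdf hAB) hzA)
        (ih γ hγ ↥B hntB (df_summand hdf hAB.symm) hzB)

end StmtElevenAux

/-- A nonzero Dedekind finite module with couniserial dimension is a finite
direct sum of indecomposable submodules. -/
theorem stmt11 (R : Type u) [Ring R] (M : Type v) [AddCommGroup M] [Module R M] [Nontrivial M]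
    (hdf : IsDedekindFiniteModule R M) (h : HasCUDim R M) :
    ∃ (n : ℕ) (N : Fin n → Submodule R M),
      DirectSum.IsInternal N ∧ ∀ i, IsIndecomposableModule R (N i) := by
  obtain ⟨α, hz⟩ := h
  exact key_induction α M inferInstance hdf hz
end

section
/- Let R be a Dedekind finite von Neumann regular ring (in particular, any unit regular ring) such that R, as a right R-module, has couniserial dimension. Then R is a semisimple artinian ring. -/
universe u v w

section Aux

variable {R : Type u} [Ring R]

theorem moduleZeta_def (α : Ordinal.{v}) (M : Type v) [AddCommGroup M] [Module R M] :
    ModuleZeta R α M ↔ ((α = 1 ∧ IsUniformModule R M) ∨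
    (1 < α ∧ ∀ N : Submodule R M, N ≠ ⊥ → ¬ Nonempty (N ≃ₗ[R] M) →
      ∃ β, ∃ _ : β < α, ModuleZeta R β N)) := by
  rw [ModuleZeta]

theorem map_bot_of_inj {M N : Type*} [AddCommGroup M] [Module R M] [AddCommGroup N]
    [Module R N] {f : M →ₗ[R] N} (hf : Function.Injective f) {K : Submodule R M}
    (h : K.map f = ⊥) : K = ⊥ := by
  rw [Submodule.eq_bot_iff] at h ⊢
  intro x hx
  apply hf
  rw [map_zero]
  exact h _ (Submodule.mem_map_of_mem hx)

theorem uniform_congr {M N : Type v} [AddCommGroup M] [Module R M] [AddCommGroup N]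
    [Module R N] (e : M ≃ₗ[R] N) (h : IsUniformModule R M) : IsUniformModule R N := by
  obtain ⟨h1, h2⟩ := h
  refine ⟨e.symm.toEquiv.nontrivial, fun N₁ N₂ hN₁ hN₂ => ?_⟩
  have key : ∀ K : Submodule R N, K.map (e.symm : N →ₗ[R] M) = ⊥ → K = ⊥ :=
    fun K hK => map_bot_of_inj e.symm.injective hK
  have h3 := h2 _ _ (fun hb => hN₁ (key _ hb)) (fun hb => hN₂ (key _ hb))
  intro hb
  apply h3
  rw [← Submodule.map_inf (e.symm : N →ₗ[R] M) e.symm.injective, hb, Submodule.map_bot]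

theorem zeta_congr (α : Ordinal.{v}) : ∀ {M N : Type v} [AddCommGroup M] [Module R M]
    [AddCommGroup N] [Module R N], (M ≃ₗ[R] N) → ModuleZeta R α M → ModuleZeta R α N := by
  induction α using Ordinal.induction with
  | _ α ih =>
    intro M N _ _ _ _ e hM
    rw [moduleZeta_def] at hM ⊢
    rcases hM with ⟨rfl, hu⟩ | ⟨hα, hM⟩
    · exact Or.inl ⟨rfl, uniform_congr e hu⟩
    · refine Or.inr ⟨hα, fun K hK hKN => ?_⟩
      set K' : Submodule R M := K.map (e.symm : N →ₗ[R] M) with hK'def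
      have eK : K ≃ₗ[R] K' := e.symm.submoduleMap K
      have hK'b : K' ≠ ⊥ := fun hb => hK (map_bot_of_inj e.symm.injective hb)
      have hK'M : ¬ Nonempty (K' ≃ₗ[R] M) := by
        rintro ⟨f⟩
        exact hKN ⟨(eK.trans f).trans e⟩
      obtain ⟨β, hβ, hζ⟩ := hM K' hK'b hK'M
      exact ⟨β, hβ, ih β hβ eK.symm hζ⟩

theorem comap_subtype_ne_bot {M : Type v} [AddCommGroup M] [Module R M]
    {p q : Submodule R M} (hpq : p ≤ q) (hp : p ≠ ⊥) :
    p.comap q.subtype ≠ ⊥ := by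
  obtain ⟨x, hx, hx0⟩ := Submodule.exists_mem_ne_zero_of_ne_bot hp
  intro hb
  rw [Submodule.eq_bot_iff] at hb
  have hmem : (⟨x, hpq hx⟩ : q) ∈ p.comap q.subtype := hx
  have := hb _ hmem
  apply hx0
  simpa using congrArg (Submodule.subtype q) this

theorem zeta_of_subsingleton {M : Type v} [AddCommGroup M] [Module R M] [Subsingleton M] :
    ModuleZeta R 2 M := by
  rw [moduleZeta_def]
  refine Or.inr ⟨one_lt_two, fun N hN _ => absurd ?_ hN⟩
  rw [Submodule.eq_bot_iff]
  intro x _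
  exact Subsingleton.elim x 0

theorem uniform_submodule {M : Type v} [AddCommGroup M] [Module R M]
    (h : IsUniformModule R M) (N : Submodule R M) (hN : N ≠ ⊥) :
    IsUniformModule R N := by
  obtain ⟨h1, h2⟩ := h
  constructor
  · exact Submodule.nontrivial_iff_ne_bot.mpr hN
  · intro K₁ K₂ hK₁ hK₂
    have inj : Function.Injective N.subtype := Subtype.val_injective
    have m1 : K₁.map N.subtype ≠ ⊥ := fun hb => hK₁ (map_bot_of_inj inj hb)
    have m2 : K₂.map N.subtype ≠ ⊥ := fun hb => hK₂ (map_bot_of_inj inj hb)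
    intro hb
    apply h2 _ _ m1 m2
    rw [← Submodule.map_inf N.subtype inj, hb, Submodule.map_bot]

theorem hasCUDim_submodule (h : HasCUDim R R) (N : Submodule R R) :
    ∃ α : Ordinal.{u}, ModuleZeta R α N := by
  obtain ⟨α, hα⟩ := h
  by_cases hN : N = ⊥
  · subst hN
    exact ⟨2, zeta_of_subsingleton⟩
  by_cases hiso : Nonempty (N ≃ₗ[R] R)
  · exact ⟨α, zeta_congr α hiso.some.symm hα⟩
  rw [moduleZeta_def] at hα
  rcases hα with ⟨rfl, hu⟩ | ⟨hα1, hsub⟩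
  · refine ⟨1, ?_⟩
    rw [moduleZeta_def]
    exact Or.inl ⟨rfl, uniform_submodule hu N hN⟩
  · obtain ⟨β, _, hζ⟩ := hsub N hN hiso
    exact ⟨β, hζ⟩

theorem chain_lemma (h : HasCUDim R R) (M : ℕ → Submodule R R)
    (hle : ∀ n, M (n + 1) ≤ M n) (hbot : ∀ n, M n ≠ ⊥) :
    ∃ n, IsUniformModule R (M n) ∨ Nonempty ((M (n + 1)) ≃ₗ[R] (M n)) := by
  by_contra hcon
  push_neg at hcon
  set F : ℕ → Ordinal.{u} := fun n => sInf {α | ModuleZeta R α (M n)} with hF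
  have hne : ∀ n, {α | ModuleZeta R α (M n)}.Nonempty := fun n => hasCUDim_submodule h (M n)
  have hmem : ∀ n, ModuleZeta R (F n) (M n) := fun n => csInf_mem (hne n)
  have hdesc : ∀ n, F (n + 1) < F n := by
    intro n
    have hn := hmem n
    rw [moduleZeta_def] at hn
    rcases hn with ⟨_, hu⟩ | ⟨hα1, hsub⟩
    · exact absurd hu (hcon n).1
    · set N' : Submodule R (M n) := (M (n+1)).comap (M n).subtype with hN'
      have e : N' ≃ₗ[R] (M (n+1)) := Submodule.comapSubtypeEquivOfLe (hle n)
      have hN'b : N' ≠ ⊥ := comap_subtype_ne_bot (hle n) (hbot (n+1))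
      have hN'iso : ¬ Nonempty (N' ≃ₗ[R] (M n)) := by
        rintro ⟨f⟩
        exact (hcon n).2.false (e.symm.trans f)
      obtain ⟨β, hβ, hζ⟩ := hsub N' hN'b hN'iso
      have : ModuleZeta R β (M (n+1)) := zeta_congr β e hζ
      exact lt_of_le_of_lt (csInf_le (OrderBot.bddBelow _) this) hβ
  have : ∀ α : Ordinal.{u}, ∀ n, F n ≠ α := by
    intro α
    induction α using Ordinal.induction with
    | _ α ih =>
      intro n hn
      exact ih (F (n+1)) (hn ▸ hdesc n) (n+1) rfl
  exact this (F 0) 0 rfl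

theorem mem_span_idem {e : R} (he : e * e = e) {x : R} :
    x ∈ Submodule.span R ({e} : Set R) ↔ x * e = x := by
  rw [Submodule.mem_span_singleton]
  constructor
  · rintro ⟨r, rfl⟩
    rw [smul_eq_mul, mul_assoc, he]
  · intro hx
    exact ⟨x, by rw [smul_eq_mul, hx]⟩

theorem mem_span_self' (x : R) : x ∈ Submodule.span R ({x} : Set R) :=
  Submodule.mem_span_singleton_self x

theorem mul_mem_span {r x : R} : r * x ∈ Submodule.span R ({x} : Set R) :=
  Submodule.mem_span_singleton.mpr ⟨r, by rw [smul_eq_mul]⟩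

theorem core_lemma (hvnr : ∀ x : R, ∃ y : R, x * y * x = x) (e x : R) (he : e * e = e)
    (hx : x ∉ Submodule.span R ({e} : Set R)) :
    ∃ g : R, g ≠ 0 ∧ g * g = g ∧ e * g = 0 ∧ g * e = 0 ∧
      Submodule.span R ({e + g} : Set R)
        = Submodule.span R ({e} : Set R) ⊔ Submodule.span R ({x} : Set R) := by
  obtain ⟨z, hz⟩ : ∃ z : R, z = x - x * e := ⟨_, rfl⟩
  have hze : z * e = 0 := by rw [hz, sub_mul, mul_assoc, he, sub_self]
  obtain ⟨c, hc⟩ := hvnr z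
  obtain ⟨f, hf⟩ : ∃ f : R, f = c * z := ⟨_, rfl⟩
  have hff : f * f = f := by rw [hf, mul_assoc c z (c*z), ← mul_assoc z c z, hc]
  have hfe : f * e = 0 := by rw [hf, mul_assoc, hze, mul_zero]
  have hzf : z * f = z := by rw [hf, ← mul_assoc, hc]
  obtain ⟨g, hg⟩ : ∃ g : R, g = f - e * f := ⟨_, rfl⟩
  have heg : e * g = 0 := by rw [hg, mul_sub, ← mul_assoc, he, sub_self]
  have hge : g * e = 0 := by
    rw [hg, sub_mul, hfe, mul_assoc, hfe, mul_zero, sub_zero]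
  have h1 : f * (e * f) = 0 := by rw [← mul_assoc, hfe, zero_mul]
  have h2 : (e * f) * f = e * f := by rw [mul_assoc, hff]
  have h3 : (e * f) * (e * f) = 0 := by rw [mul_assoc, h1, mul_zero]
  have hgg : g * g = g := by
    rw [hg, sub_mul, mul_sub, mul_sub, hff, h1, h2, h3, sub_zero, sub_zero]
  have hg0 : g ≠ 0 := by
    intro h0
    apply hx
    have hfef : f = e * f := by
      have := hg.symm.trans h0
      rwa [sub_eq_zero] at this
    have hz0 : z = 0 := by
      rw [← hzf, hfef, ← mul_assoc, hze, zero_mul]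
    rw [mem_span_idem he]
    rw [hz, sub_eq_zero] at hz0
    exact hz0.symm
  have hzg : z * g = z := by
    rw [hg, mul_sub, hzf, ← mul_assoc, hze, zero_mul, sub_zero]
  have hidem : (e + g) * (e + g) = e + g := by
    rw [add_mul, mul_add, mul_add, he, heg, hge, hgg, add_zero, zero_add]
  refine ⟨g, hg0, hgg, heg, hge, le_antisymm ?_ (sup_le ?_ ?_)⟩
  · rw [Submodule.span_le, Set.singleton_subset_iff, SetLike.mem_coe]
    have hfmem : f ∈ Submodule.span R ({e} : Set R) ⊔ Submodule.span R ({x} : Set R) := by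
      have h4 : f = (c * x) - ((c * x) * e) := by rw [hf, hz, mul_sub, mul_assoc]
      rw [h4]
      exact Submodule.sub_mem _ (Submodule.mem_sup_right mul_mem_span)
        (Submodule.mem_sup_left mul_mem_span)
    have h5 : e + g = (e + f) - e * f := by rw [hg]; abel
    rw [h5]
    refine Submodule.sub_mem _
      (Submodule.add_mem _ (Submodule.mem_sup_left (mem_span_self' e)) hfmem) ?_
    have := Submodule.smul_mem _ e hfmem
    rwa [smul_eq_mul] at this
  · rw [Submodule.span_le, Set.singleton_subset_iff, SetLike.mem_coe,
      mem_span_idem hidem, mul_add, he, heg, add_zero]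
  · rw [Submodule.span_le, Set.singleton_subset_iff, SetLike.mem_coe]
    have hsplit : x = z + x * e := by rw [hz]; abel
    rw [hsplit]
    apply Submodule.add_mem
    · rw [mem_span_idem hidem, mul_add, hze, hzg, zero_add]
    · rw [mem_span_idem hidem, mul_add, mul_assoc x e e, he, mul_assoc x e g, heg,
        mul_zero, add_zero]

theorem one_sub_idem {e : R} (he : e * e = e) : (1 - e) * (1 - e) = 1 - e := by
  rw [sub_mul, one_mul, mul_sub, mul_one, he, sub_self, sub_zero]

theorem span_one_eq_top : Submodule.span R ({1} : Set R) = ⊤ := by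
  rw [eq_top_iff]
  intro x _
  exact (mem_span_idem (one_mul 1)).mpr (mul_one x)

theorem every_ideal_idem_span (hvnr : ∀ x : R, ∃ y : R, x * y * x = x)
    (hdf : ∀ x y : R, x * y = 1 → y * x = 1) (h : HasCUDim R R) :
    ∀ I : Submodule R R, ∃ e : R, e * e = e ∧ I = Submodule.span R ({e} : Set R) := by
  by_contra hcon
  push_neg at hcon
  obtain ⟨I, hI⟩ := hcon
  let T := {s : R // s * s = s ∧ Submodule.span R ({s} : Set R) ≤ I}
  have step : ∀ t : T, ∃ t' : T, ∃ g : R, (t' : R) = (t : R) + g ∧ g ≠ 0 ∧ g * g = g ∧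
      (t : R) * g = 0 ∧ g * (t : R) = 0 := by
    rintro ⟨s, hs, hsI⟩
    have hne : Submodule.span R ({s} : Set R) ≠ I := fun hsp => hI s hs hsp.symm
    obtain ⟨x, hxI, hxns⟩ := SetLike.exists_of_lt (lt_of_le_of_ne hsI hne)
    obtain ⟨g, hg0, hgg, hsg, hgs, hspan⟩ := core_lemma hvnr s x hs hxns
    refine ⟨⟨s + g, ?_, ?_⟩, g, rfl, hg0, hgg, hsg, hgs⟩
    · rw [add_mul, mul_add, mul_add, hs, hsg, hgs, hgg, add_zero, zero_add]
    · rw [hspan]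
      exact sup_le hsI (Submodule.span_le.mpr (Set.singleton_subset_iff.mpr hxI))
  choose F hF using step
  have t0 : T := ⟨0, by rw [mul_zero], by rw [Submodule.span_zero_singleton]; exact bot_le⟩
  set f : ℕ → T := fun n => F^[n] t0 with hf_def
  have hstep : ∀ n, f (n + 1) = F (f n) := fun n => Function.iterate_succ_apply' F n t0
  set s : ℕ → R := fun n => (f n : R) with hs_def
  choose e hse he0 hee hsE hEs using fun n => hF (f n)
  have hs_idem : ∀ n, s n * s n = s n := fun n => (f n).2.1
  have hsn1 : ∀ n, s (n + 1) = s n + e n := by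
    intro n
    have h1 : ((f (n+1) : R)) = ((F (f n) : R)) := congrArg _ (hstep n)
    exact h1.trans (hse n)
  have hs1E : ∀ n, s (n + 1) * e n = e n := by
    intro n
    rw [hsn1 n, add_mul, hsE, hee, zero_add]
  have hs1s : ∀ n, s (n + 1) * s n = s n := by
    intro n
    rw [hsn1 n, add_mul, hs_idem, hEs, add_zero]
  have h1s_idem : ∀ n, (1 - s n) * (1 - s n) = 1 - s n := fun n => one_sub_idem (hs_idem n)
  set M : ℕ → Submodule R R := fun n => Submodule.span R ({1 - s n} : Set R) with hM_def
  have hmemM : ∀ n (w : R), w ∈ M n ↔ w * (1 - s n) = w := fun n w => mem_span_idem (h1s_idem n)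
  have hwsn : ∀ n (w : R), w ∈ M n → w * s n = 0 := by
    intro n w hw
    rw [hmemM] at hw
    have h1 : w * (1 - s n) * s n = w * s n := by rw [hw]
    rw [mul_assoc, sub_mul, one_mul, hs_idem, sub_self, mul_zero] at h1
    exact h1.symm
  have hle : ∀ n, M (n + 1) ≤ M n := by
    intro n
    apply Submodule.span_le.mpr
    rw [Set.singleton_subset_iff, SetLike.mem_coe, hmemM]
    rw [mul_sub, mul_one, sub_mul, one_mul, hs1s, sub_self, sub_zero]
  have hwE : ∀ n (w : R), w ∈ M (n + 1) → w * e n = 0 := by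
    intro n w hw
    have hE_eq : e n = s (n + 1) - s n := by rw [hsn1 n]; abel
    have h1 : w * s (n + 1) = 0 := hwsn (n+1) w hw
    have h2 : w * s n = 0 := by
      rw [← hs1s n, ← mul_assoc, h1, zero_mul]
    rw [hE_eq, mul_sub, h1, h2, sub_zero]
  have hbot : ∀ n, M n ≠ ⊥ := by
    intro n hb
    rw [hM_def] at hb
    simp only [Submodule.span_singleton_eq_bot, sub_eq_zero] at hb
    apply hI (s n) (hs_idem n)
    have h1 : Submodule.span R ({s n} : Set R) = ⊤ := by rw [← hb]; exact span_one_eq_top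
    exact le_antisymm (le_trans le_top (le_of_eq h1.symm)) (f n).2.2
  obtain ⟨n, hcase⟩ := chain_lemma h M hle hbot
  rcases hcase with hu | hiso
  · -- uniform case
    have hEmem : e n ∈ M n := by
      rw [hmemM, mul_sub, mul_one, hEs, sub_zero]
    have hA_le : Submodule.span R ({e n} : Set R) ≤ M n :=
      Submodule.span_le.mpr (Set.singleton_subset_iff.mpr hEmem)
    have hA_bot : Submodule.span R ({e n} : Set R) ≠ ⊥ := by
      rw [Ne, Submodule.span_singleton_eq_bot]
      exact he0 n
    have hinf : Submodule.span R ({e n} : Set R) ⊓ M (n + 1) = ⊥ := by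
      rw [Submodule.eq_bot_iff]
      rintro x ⟨hx1, hx2⟩
      have h1 : x * e n = x := (mem_span_idem (hee n)).mp hx1
      have h2 : x * e n = 0 := hwE n x hx2
      rw [h1] at h2
      exact h2
    obtain ⟨_, hu2⟩ := hu
    apply hu2 (Submodule.comap (M n).subtype (Submodule.span R ({e n} : Set R)))
      (Submodule.comap (M n).subtype (M (n + 1)))
      (comap_subtype_ne_bot hA_le hA_bot)
      (comap_subtype_ne_bot (hle n) (hbot (n + 1)))
    rw [← Submodule.comap_inf, hinf, Submodule.comap_bot, Submodule.ker_subtype]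
  · -- isomorphism case
    obtain ⟨θ⟩ := hiso
    have ψ := θ.symm
    have humem : (1 - s n) ∈ M n := Submodule.mem_span_singleton_self _
    set u : M n := ⟨1 - s n, humem⟩ with hu_def
    set a : R := s n + (ψ u : R) with ha_def
    have hra : ∀ r : R, r * a = r * s n + ((ψ (r • u) : R)) := by
      intro r
      rw [ha_def, mul_add]
      congr 1
      rw [map_smul]
      simp [smul_eq_mul]
    have hinj : ∀ r : R, r * a = 0 → r = 0 := by
      intro r hr
      rw [hra r] at hr
      have hv : ((ψ (r • u) : R)) ∈ M (n + 1) := (ψ (r • u)).2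
      have hrs : r * s n = 0 := by
        have h1 := congrArg (· * s n) hr
        simp only [add_mul, zero_mul] at h1
        rw [mul_assoc, hs_idem, hwsn n _ (hle n hv), add_zero] at h1
        exact h1
      rw [hrs, zero_add] at hr
      have h2 : ψ (r • u) = 0 := Subtype.ext (by rw [hr]; exact (ZeroMemClass.coe_zero _).symm)
      have hru : r • u = 0 := ψ.injective (by rw [h2, map_zero])
      have h3 : r * (1 - s n) = 0 := by
        have := congrArg (fun m : M n => (m : R)) hru
        simpa [hu_def, smul_eq_mul] using this
      calc r = r * s n + r * (1 - s n) := by rw [mul_sub, mul_one]; abel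
        _ = 0 := by rw [hrs, h3, add_zero]
    obtain ⟨c, hc⟩ := hvnr a
    have hac : a * c = 1 := by
      have h0 : (a * c - 1) * a = 0 := by rw [sub_mul, one_mul, hc, sub_self]
      have := hinj _ h0
      rwa [sub_eq_zero] at this
    have hca : c * a = 1 := hdf a c hac
    have hkey : e n = (e n * c) * a := by
      rw [mul_assoc, hca, mul_one]
    rw [hra (e n * c)] at hkey
    have hv' : ((ψ ((e n * c) • u) : R)) ∈ M (n + 1) := (ψ ((e n * c) • u)).2
    have hEn0 : e n = 0 := by
      have h1 := congrArg (· * e n) hkey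
      simp only [add_mul] at h1
      rw [hee n, mul_assoc (e n * c) (s n) (e n), hsE, mul_zero, hwE n _ hv', zero_add] at h1
      exact h1
    exact he0 n hEn0

end Aux

/-- A Dedekind finite von Neumann regular ring with couniserial dimension (as
a module over itself) is semisimple artinian. -/
theorem stmt12 (R : Type u) [Ring R]
    (hvnr : ∀ x : R, ∃ y : R, x * y * x = x)
    (hdf : ∀ x y : R, x * y = 1 → y * x = 1)
    (h : HasCUDim R R) :
    IsSemisimpleRing R := by
  have key := every_ideal_idem_span hvnr hdf h
  refine (isSemisimpleModule_iff _ _).mpr ⟨?_⟩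
  intro I
  obtain ⟨e, he, rfl⟩ := key I
  refine ⟨Submodule.span R ({1 - e} : Set R), ?_, ?_⟩
  · rw [Submodule.disjoint_def]
    intro x hx1 hx2
    have h1 : x * e = x := (mem_span_idem he).mp hx1
    have h2 : x * (1 - e) = x := (mem_span_idem (one_sub_idem he)).mp hx2
    rw [mul_sub, mul_one, h1, sub_self] at h2
    exact h2.symm
  · rw [codisjoint_iff, eq_top_iff]
    intro x _
    rw [Submodule.mem_sup]
    exact ⟨x * e, mul_mem_span, x * (1 - e), mul_mem_span, by rw [mul_sub, mul_one]; abel⟩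
end

section
/- Let P be an anti-coHopfian projective right R-module and let E be an injective hull of P. If the countably infinite direct sum ⊕_{i=1}^∞ E has couniserial dimension, then P is injective. -/
universe u v w

section Aux
variable {R : Type u} [Ring R]

lemma aux_map_ne_bot {M M' : Type v} [AddCommGroup M] [Module R M] [AddCommGroup M']
    [Module R M'] (e : M ≃ₗ[R] M') {N : Submodule R M} (h : N ≠ ⊥) :
    N.map (e : M →ₗ[R] M') ≠ ⊥ := by
  obtain ⟨x, hx, hx0⟩ := (Submodule.ne_bot_iff N).1 h
  exact (Submodule.ne_bot_iff _).2 ⟨e x, Submodule.mem_map_of_mem hx,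
    fun h0 => hx0 (by simpa using e.injective (h0.trans (map_zero (e : M →ₗ[R] M')).symm))⟩

lemma aux_uniform_congr {M M' : Type v} [AddCommGroup M] [Module R M] [AddCommGroup M']
    [Module R M'] (e : M ≃ₗ[R] M') (h : IsUniformModule R M) : IsUniformModule R M' := by
  obtain ⟨hnt, h⟩ := h
  refine ⟨e.symm.toEquiv.nontrivial, fun N₁ N₂ h₁ h₂ hbot => ?_⟩
  have h₁' := aux_map_ne_bot e.symm h₁
  have h₂' := aux_map_ne_bot e.symm h₂
  refine h _ _ h₁' h₂' ?_
  rw [← Submodule.map_inf (e.symm : M' →ₗ[R] M) e.symm.injective, hbot, Submodule.map_bot]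

lemma aux_zeta_congr (α : Ordinal.{v}) :
    ∀ {M M' : Type v} [AddCommGroup M] [Module R M] [AddCommGroup M'] [Module R M']
      (_ : M ≃ₗ[R] M'), ModuleZeta R α M → ModuleZeta R α M' := by
  induction α using Ordinal.induction with
  | h α IH =>
    intro M M' _ _ _ _ e hz
    rw [ModuleZeta] at hz ⊢
    rcases hz with ⟨rfl, hu⟩ | ⟨hα, h2⟩
    · exact Or.inl ⟨rfl, aux_uniform_congr e hu⟩
    · refine Or.inr ⟨hα, fun N' hN' hni => ?_⟩
      have χ : N' ≃ₗ[R] (N'.map (e.symm : M' →ₗ[R] M)) := e.symm.submoduleMap N'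
      have hNbot : N'.map (e.symm : M' →ₗ[R] M) ≠ ⊥ := aux_map_ne_bot e.symm hN'
      have hNni : ¬ Nonempty ((N'.map (e.symm : M' →ₗ[R] M)) ≃ₗ[R] M) := by
        rintro ⟨ψ⟩
        exact hni ⟨χ.trans (ψ.trans e)⟩
      obtain ⟨β, hβ, hzN⟩ := h2 _ hNbot hNni
      exact ⟨β, hβ, IH β hβ χ.symm hzN⟩

lemma aux_no_pingpong (α : Ordinal.{v}) :
    ∀ {X Y : Type v} [AddCommGroup X] [Module R X] [AddCommGroup Y] [Module R Y]
      (_ : Nontrivial X) (_ : Nontrivial Y)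
      (_ : ¬ IsUniformModule R X) (_ : ¬ IsUniformModule R Y)
      (u : Y →ₗ[R] X) (_ : Function.Injective u)
      (v : X →ₗ[R] Y) (_ : Function.Injective v)
      (_ : ¬ Nonempty (Y ≃ₗ[R] X)), ¬ ModuleZeta R α X := by
  induction α using Ordinal.induction with
  | h α IH =>
    intro X Y _ _ _ _ hX hY hXu hYu u hu v hv hne hz
    rw [ModuleZeta] at hz
    rcases hz with ⟨-, hun⟩ | ⟨-, h2⟩
    · exact hXu hun
    · have hrb : LinearMap.range u ≠ ⊥ := by
        obtain ⟨y, hy⟩ := exists_ne (0 : Y)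
        refine (Submodule.ne_bot_iff _).2 ⟨u y, LinearMap.mem_range_self u y, fun h0 => hy ?_⟩
        exact hu (by rw [h0, map_zero])
      have hrni : ¬ Nonempty ((LinearMap.range u) ≃ₗ[R] X) := by
        rintro ⟨ψ⟩; exact hne ⟨(LinearEquiv.ofInjective u hu).trans ψ⟩
      obtain ⟨β, hβ, hzr⟩ := h2 _ hrb hrni
      have hzY : ModuleZeta R β Y := aux_zeta_congr β (LinearEquiv.ofInjective u hu).symm hzr
      rw [ModuleZeta] at hzY
      rcases hzY with ⟨-, hun⟩ | ⟨-, h2'⟩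
      · exact hYu hun
      · have hrb' : LinearMap.range v ≠ ⊥ := by
          obtain ⟨x, hx⟩ := exists_ne (0 : X)
          refine (Submodule.ne_bot_iff _).2 ⟨v x, LinearMap.mem_range_self v x, fun h0 => hx ?_⟩
          exact hv (by rw [h0, map_zero])
        have hrni' : ¬ Nonempty ((LinearMap.range v) ≃ₗ[R] Y) := by
          rintro ⟨ψ⟩; exact hne ⟨((LinearEquiv.ofInjective v hv).trans ψ).symm⟩
        obtain ⟨γ, hγ, hzr'⟩ := h2' _ hrb' hrni'
        exact IH γ (hγ.trans hβ) hX hY hXu hYu u hu v hv hne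
          (aux_zeta_congr γ (LinearEquiv.ofInjective v hv).symm hzr')

lemma aux_iso_of_pingpong {X Y : Type v} [AddCommGroup X] [Module R X] [AddCommGroup Y]
    [Module R Y] [Nontrivial X] [Nontrivial Y]
    (hXu : ¬ IsUniformModule R X) (hYu : ¬ IsUniformModule R Y)
    (u : Y →ₗ[R] X) (hu : Function.Injective u)
    (v : X →ₗ[R] Y) (hv : Function.Injective v)
    (h : HasCUDim R X) : Nonempty (Y ≃ₗ[R] X) := by
  by_contra hne
  obtain ⟨α, hα⟩ := h
  exact aux_no_pingpong α ‹_› ‹_› hXu hYu u hu v hv hne hα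

end Aux

section Aux2
variable {R : Type u} [Ring R] {E : Type v} [AddCommGroup E] [Module R E]

local notation "X" => DirectSum ℕ (fun _ : ℕ => E)

noncomputable def auxShift : X →ₗ[R] X :=
  DirectSum.toModule R ℕ _ (fun n => DirectSum.lof R ℕ (fun _ : ℕ => E) (n + 1))

lemma auxShift_of (n : ℕ) (e : E) :
    auxShift (R := R) (DirectSum.lof R ℕ (fun _ : ℕ => E) n e)
      = DirectSum.lof R ℕ (fun _ : ℕ => E) (n + 1) e :=
  DirectSum.toModule_lof (R := R) (φ := fun n => DirectSum.lof R ℕ (fun _ : ℕ => E) (n + 1)) n e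

lemma auxShift_apply_zero (x : X) : auxShift (R := R) x 0 = 0 := by
  induction x using DirectSum.induction_on with
  | zero => simp
  | of n e =>
      rw [← DirectSum.lof_eq_of R, auxShift_of, DirectSum.lof_eq_of]
      exact DirectSum.of_eq_of_ne _ _ _ (by omega)
  | add x y hx hy =>
      rw [map_add (auxShift (R := R)) x y, DirectSum.add_apply, hx, hy, add_zero]

lemma auxShift_apply_succ (x : X) (n : ℕ) : auxShift (R := R) x (n + 1) = x n := by
  induction x using DirectSum.induction_on with
  | zero => simp
  | of m e =>
      rw [← DirectSum.lof_eq_of R, auxShift_of, DirectSum.lof_eq_of, DirectSum.lof_eq_of]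
      rcases eq_or_ne m n with rfl | hmn
      · rw [DirectSum.of_eq_same, DirectSum.of_eq_same]
      · rw [DirectSum.of_eq_of_ne _ _ _ (by omega), DirectSum.of_eq_of_ne _ _ _ hmn.symm]
  | add x y hx hy =>
      rw [map_add (auxShift (R := R)) x y, DirectSum.add_apply, hx, hy, DirectSum.add_apply]

lemma auxShift_injective : Function.Injective (auxShift (R := R) (E := E)) := by
  intro x y hxy
  refine DirectSum.ext (fun n => ?_)
  have := congrArg (fun z : X => z (n + 1)) hxy
  simpa [auxShift_apply_succ] using this

lemma aux_not_uniform_X [Nontrivial E] : ¬ IsUniformModule R X := by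
  rintro ⟨-, h⟩
  obtain ⟨e, he⟩ := exists_ne (0 : E)
  have hb : ∀ k : ℕ, LinearMap.range (DirectSum.lof R ℕ (fun _ : ℕ => E) k) ≠ ⊥ := by
    intro k
    refine (Submodule.ne_bot_iff _).2 ⟨_, LinearMap.mem_range_self _ e, fun h0 => he ?_⟩
    have h1 : DirectSum.lof R ℕ (fun _ : ℕ => E) k e = DirectSum.lof R ℕ (fun _ : ℕ => E) k 0 := by
      rw [h0, map_zero]
    rw [DirectSum.lof_eq_of, DirectSum.lof_eq_of] at h1
    exact DirectSum.of_injective (β := fun _ : ℕ => E) k h1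
  refine h _ _ (hb 0) (hb 1) ((Submodule.eq_bot_iff _).2 ?_)
  rintro z ⟨⟨a, rfl⟩, ⟨b, hb'⟩⟩
  have h0 : a = 0 := by
    have h2 := congrArg (fun w : X => w 0) hb'
    simp only [DirectSum.lof_eq_of] at h2
    rw [DirectSum.of_eq_same] at h2
    rw [DirectSum.of_eq_of_ne _ _ _ (by omega)] at h2
    exact h2.symm
  rw [h0, map_zero]

end Aux2

lemma aux_retract_injective {R : Type u} [Ring R] {P : Type v} {Q : Type v}
    [AddCommGroup P] [Module R P] [AddCommGroup Q] [Module R Q]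
    (hQ : Module.Injective R Q) (s : P →ₗ[R] Q) (r : Q →ₗ[R] P) (hrs : ∀ p, r (s p) = p) :
    Module.Injective R P := by
  constructor
  intro XX YY _ _ _ _ f hf g
  obtain ⟨h', hh'⟩ := hQ.out f hf (s.comp g)
  refine ⟨r.comp h', fun x => ?_⟩
  simp only [LinearMap.coe_comp, Function.comp_apply]
  rw [hh' x]
  exact hrs (g x)

lemma aux_pi_injective {R : Type u} [Ring R] {ι : Type} {E : Type v}
    [AddCommGroup E] [Module R E] (hE : Module.Injective R E) :
    Module.Injective R (ι → E) := by
  constructor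
  intro XX YY _ _ _ _ f hf g
  have H : ∀ n : ι, ∃ h : YY →ₗ[R] E,
      ∀ x, h (f x) = ((LinearMap.proj (R := R) (φ := fun _ : ι => E) n).comp g) x :=
    fun n => hE.out f hf ((LinearMap.proj (R := R) (φ := fun _ : ι => E) n).comp g)
  choose h hh using H
  refine ⟨LinearMap.pi h, fun x => ?_⟩
  funext n
  simpa using hh n x



/-- If `P` is an anti-coHopfian projective module whose injective hull `E`
satisfies that `⊕_{i=1}^∞ E` has couniserial dimension, then `P` is injective. -/
theorem stmt17 (R : Type u) [Ring R] (P E : Type v) [AddCommGroup P] [Module R P]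
    [AddCommGroup E] [Module R E] [Nontrivial P]
    (hanti : ∀ N : Submodule R P, N ≠ ⊥ → Nonempty (P ≃ₗ[R] N))
    (hproj : Module.Projective R P)
    (i : P →ₗ[R] E) (hi : Function.Injective i) (hE : Module.Injective R E)
    (hess : IsEssentialSubmodule R (LinearMap.range i))
    (h : HasCUDim R (DirectSum ℕ fun _ : ℕ => E)) :
    Module.Injective R P := by
  classical
  obtain ⟨p₀, hp₀⟩ := exists_ne (0 : P)
  have hip₀ : i p₀ ≠ 0 := fun h0 => hp₀ (hi (by rw [h0, map_zero]))
  haveI hEnt : Nontrivial E := ⟨i p₀, 0, hip₀⟩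
  haveI hXnt : Nontrivial (DirectSum ℕ fun _ : ℕ => E) := by
    refine ⟨DirectSum.of (fun _ : ℕ => E) 0 (i p₀), 0, fun h0 => hip₀ ?_⟩
    exact DirectSum.of_injective (β := fun _ : ℕ => E) 0 (by rw [h0]; exact (map_zero _).symm)
  -- the injection u : P × X → X
  set u : (P × (DirectSum ℕ fun _ : ℕ => E)) →ₗ[R] (DirectSum ℕ fun _ : ℕ => E) :=
    (DirectSum.lof R ℕ (fun _ : ℕ => E) 0).comp
        (i.comp (LinearMap.fst R P (DirectSum ℕ fun _ : ℕ => E))) +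
      (auxShift (R := R) (E := E)).comp
        (LinearMap.snd R P (DirectSum ℕ fun _ : ℕ => E)) with hu_def
  have hu_apply : ∀ (p : P) (x : DirectSum ℕ fun _ : ℕ => E),
      u (p, x) = DirectSum.lof R ℕ (fun _ : ℕ => E) 0 (i p) + auxShift (R := R) x := by
    intro p x; rfl
  have hu_zero : ∀ (p : P) (x : DirectSum ℕ fun _ : ℕ => E), u (p, x) 0 = i p := by
    intro p x
    rw [hu_apply, DirectSum.add_apply, auxShift_apply_zero, add_zero, DirectSum.lof_eq_of,
      DirectSum.of_eq_same]
  have hu_succ : ∀ (p : P) (x : DirectSum ℕ fun _ : ℕ => E) (n : ℕ), u (p, x) (n + 1) = x n := by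
    intro p x n
    rw [hu_apply, DirectSum.add_apply, auxShift_apply_succ, DirectSum.lof_eq_of,
      DirectSum.of_eq_of_ne _ _ _ (by omega), zero_add]
  have hu : Function.Injective u := by
    rintro ⟨p, x⟩ ⟨q, y⟩ hab
    have h1 : p = q := hi (by rw [← hu_zero p x, ← hu_zero q y, hab])
    have h2 : x = y := by
      refine DirectSum.ext_component R (fun n => ?_)
      rw [← DirectSum.apply_eq_component, ← DirectSum.apply_eq_component,
        ← hu_succ p x n, ← hu_succ q y n, hab]
    rw [h1, h2]
  set v : (DirectSum ℕ fun _ : ℕ => E) →ₗ[R] (P × (DirectSum ℕ fun _ : ℕ => E)) :=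
    LinearMap.prod 0 LinearMap.id with hv_def
  have hv : Function.Injective v := by
    intro a b hab
    simpa [hv_def, LinearMap.prod_apply, Prod.ext_iff] using hab
  -- non-uniformity of Y = P × X
  have hYu : ¬ IsUniformModule R (P × (DirectSum ℕ fun _ : ℕ => E)) := by
    rintro ⟨-, hun⟩
    refine hun ((⊤ : Submodule R P).prod ⊥) ((⊥ : Submodule R P).prod ⊤) ?_ ?_ ?_
    · refine (Submodule.ne_bot_iff _).2 ⟨(p₀, 0), ?_, fun h0 => hp₀ (congrArg Prod.fst h0)⟩
      exact ⟨Submodule.mem_top, Submodule.zero_mem _⟩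
    · refine (Submodule.ne_bot_iff _).2
        ⟨(0, DirectSum.of (fun _ : ℕ => E) 0 (i p₀)), ?_, fun h0 => ?_⟩
      · exact ⟨Submodule.zero_mem _, Submodule.mem_top⟩
      · have h1 : DirectSum.of (fun _ : ℕ => E) 0 (i p₀) = 0 := congrArg Prod.snd h0
        exact hip₀ (DirectSum.of_injective (β := fun _ : ℕ => E) 0
          (by rw [h1]; exact (map_zero _).symm))
    · refine (Submodule.eq_bot_iff _).2 ?_
      rintro ⟨z1, z2⟩ ⟨⟨-, hz2⟩, ⟨hz1, -⟩⟩
      have hz1' : z1 = 0 := hz1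
      have hz2' : z2 = 0 := hz2
      rw [hz1', hz2']; rfl
  obtain ⟨e⟩ := aux_iso_of_pingpong (aux_not_uniform_X (R := R) (E := E)) hYu u hu v hv h
  -- retraction
  set σ : P →ₗ[R] (DirectSum ℕ fun _ : ℕ => E) :=
    e.toLinearMap.comp (LinearMap.inl R P (DirectSum ℕ fun _ : ℕ => E)) with hσ_def
  set ρ : (DirectSum ℕ fun _ : ℕ => E) →ₗ[R] P :=
    (LinearMap.fst R P (DirectSum ℕ fun _ : ℕ => E)).comp e.symm.toLinearMap with hρ_def
  have hρσ : ∀ p : P, ρ (σ p) = p := by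
    intro p
    rw [hσ_def, hρ_def]
    simp
  -- cyclic generator
  have hspan : (Submodule.span R {p₀} : Submodule R P) ≠ ⊥ := by
    refine (Submodule.ne_bot_iff _).2 ⟨p₀, Submodule.mem_span_singleton_self p₀, hp₀⟩
  obtain ⟨φ⟩ := hanti (Submodule.span R {p₀}) hspan
  set g : P := φ.symm ⟨p₀, Submodule.mem_span_singleton_self p₀⟩ with hg_def
  have hgen : ∀ p : P, ∃ r : R, p = r • g := by
    intro p
    obtain ⟨r, hr⟩ := Submodule.mem_span_singleton.1 (φ p).2
    refine ⟨r, ?_⟩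
    have hφ : φ p = r • (⟨p₀, Submodule.mem_span_singleton_self p₀⟩ :
        Submodule.span R {p₀}) := by
      apply Subtype.ext
      simpa using hr.symm
    calc p = φ.symm (φ p) := (φ.symm_apply_apply p).symm
      _ = r • g := by rw [hφ, map_smul, hg_def]
  -- finite support
  set s : Finset ℕ := (σ g).support with hs_def
  have hsupp : ∀ (p : P) (m : ℕ), m ∉ s → σ p m = 0 := by
    intro p m hm
    obtain ⟨r, rfl⟩ := hgen p
    rw [map_smul, DFinsupp.smul_apply, DFinsupp.notMem_support_iff.1 hm, smul_zero]
  -- the finite product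
  set σ' : P →ₗ[R] (↥s → E) :=
    LinearMap.pi (fun n : ↥s => (DirectSum.component R ℕ (fun _ : ℕ => E) ↑n).comp σ)
    with hσ'_def
  set j : (↥s → E) →ₗ[R] (DirectSum ℕ fun _ : ℕ => E) :=
    ∑ n : ↥s, (DirectSum.lof R ℕ (fun _ : ℕ => E) ↑n).comp
      (LinearMap.proj (R := R) (φ := fun _ : ↥s => E) n) with hj_def
  have hj : ∀ p : P, j (σ' p) = σ p := by
    intro p
    have hterm : ∀ w : ↥s → E, j w = ∑ n : ↥s, DirectSum.lof R ℕ (fun _ : ℕ => E) ↑n (w n) := by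
      intro w
      rw [hj_def, LinearMap.sum_apply]
      rfl
    refine DFunLike.ext _ _ (fun m => ?_)
    rw [hterm]
    have hsum : (∑ n : ↥s, DirectSum.lof R ℕ (fun _ : ℕ => E) ↑n (σ' p n)) m
        = ∑ n : ↥s, (DirectSum.lof R ℕ (fun _ : ℕ => E) ↑n (σ' p n)) m :=
      DFinsupp.finset_sum_apply _ _ m
    rw [hsum]
    by_cases hm : m ∈ s
    · rw [Fintype.sum_eq_single (⟨m, hm⟩ : ↥s)]
      · rw [DirectSum.lof_eq_of, DirectSum.of_eq_same]
        rfl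
      · intro n hn
        rw [DirectSum.lof_eq_of, DirectSum.of_eq_of_ne]
        exact fun hc => hn (Subtype.ext hc.symm)
    · rw [Finset.sum_eq_zero, hsupp p m hm]
      intro n _
      rw [DirectSum.lof_eq_of, DirectSum.of_eq_of_ne]
      exact fun hc => hm (hc ▸ n.2)
  exact aux_retract_injective (aux_pi_injective hE) σ' (ρ.comp j)
    (fun p => by rw [LinearMap.comp_apply, hj p, hρσ p])
end

section
/- If every finitely generated right R-module has couniserial dimension, then every nonzero right R-module contains a submodule that is both noetherian and uniform. -/
universe u v w

section StmtEighteenAux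

variable {R : Type u} [Ring R]

theorem moduleZeta_iff (α : Ordinal.{v}) (M : Type v) [AddCommGroup M] [Module R M] :
    ModuleZeta R α M ↔ (α = 1 ∧ IsUniformModule R M) ∨
      (1 < α ∧ ∀ N : Submodule R M, N ≠ ⊥ → ¬ Nonempty (N ≃ₗ[R] M) →
        ∃ β, ∃ _ : β < α, ModuleZeta R β N) := by
  rw [ModuleZeta]

theorem IsUniformModule.congr {M : Type v} {N : Type w} [AddCommGroup M] [Module R M]
    [AddCommGroup N] [Module R N] (h : IsUniformModule R M) (e : M ≃ₗ[R] N) :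
    IsUniformModule R N := by
  obtain ⟨h1, h2⟩ := h
  refine ⟨Equiv.nontrivial e.symm.toEquiv, ?_⟩
  intro N₁ N₂ hN₁ hN₂
  have key : ∀ K : Submodule R N, K ≠ ⊥ → K.map (e.symm : N →ₗ[R] M) ≠ ⊥ := by
    intro K hK
    obtain ⟨z, hz, hz0⟩ := (Submodule.ne_bot_iff K).mp hK
    refine (Submodule.ne_bot_iff _).mpr ⟨e.symm z, ⟨z, hz, rfl⟩, fun h0 => hz0 ?_⟩
    have := congrArg e h0
    simpa using this
  have h3 := h2 _ _ (key N₁ hN₁) (key N₂ hN₂)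
  obtain ⟨z, hz, hz0⟩ := (Submodule.ne_bot_iff _).mp h3
  obtain ⟨hz1, hz2⟩ := Submodule.mem_inf.mp hz
  obtain ⟨x₁, hx₁, hex₁⟩ := Submodule.mem_map.mp hz1
  obtain ⟨x₂, hx₂, hex₂⟩ := Submodule.mem_map.mp hz2
  have hx12 : x₁ = x₂ := e.symm.injective (hex₁.trans hex₂.symm)
  refine (Submodule.ne_bot_iff _).mpr ⟨x₁, Submodule.mem_inf.mpr ⟨hx₁, hx12 ▸ hx₂⟩, ?_⟩
  rintro rfl
  apply hz0
  rw [← hex₁]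
  simp

theorem IsUniformModule.submodule {M : Type v} [AddCommGroup M] [Module R M]
    (h : IsUniformModule R M) (K : Submodule R M) (hK : K ≠ ⊥) :
    IsUniformModule R ↥K := by
  refine ⟨Submodule.nontrivial_iff_ne_bot.mpr hK, ?_⟩
  intro N₁ N₂ hN₁ hN₂
  have key : ∀ L : Submodule R ↥K, L ≠ ⊥ → L.map K.subtype ≠ ⊥ := by
    intro L hL
    obtain ⟨z, hz, hz0⟩ := (Submodule.ne_bot_iff L).mp hL
    exact (Submodule.ne_bot_iff _).mpr ⟨(z : M), ⟨z, hz, rfl⟩, by simpa using hz0⟩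
  have h3 := h.2 _ _ (key N₁ hN₁) (key N₂ hN₂)
  obtain ⟨z, hz, hz0⟩ := (Submodule.ne_bot_iff _).mp h3
  obtain ⟨hz1, hz2⟩ := Submodule.mem_inf.mp hz
  obtain ⟨x₁, hx₁, hex₁⟩ := Submodule.mem_map.mp hz1
  obtain ⟨x₂, hx₂, hex₂⟩ := Submodule.mem_map.mp hz2
  have hx12 : x₁ = x₂ := by
    apply Subtype.ext
    have := hex₁.trans hex₂.symm
    simpa using this
  refine (Submodule.ne_bot_iff _).mpr ⟨x₁, Submodule.mem_inf.mpr ⟨hx₁, hx12 ▸ hx₂⟩, ?_⟩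
  rintro rfl
  apply hz0
  rw [← hex₁]
  simp

theorem not_uniform_of_pair {M : Type v} [AddCommGroup M] [Module R M]
    {K X Y : Submodule R M} (hXK : X ≤ K) (hYK : Y ≤ K) (hX : X ≠ ⊥) (hY : Y ≠ ⊥)
    (hXY : X ⊓ Y = ⊥) : ¬ IsUniformModule R ↥K := by
  intro h
  obtain ⟨x, hx, hx0⟩ := (Submodule.ne_bot_iff X).mp hX
  obtain ⟨y, hy, hy0⟩ := (Submodule.ne_bot_iff Y).mp hY
  have hX' : X.comap K.subtype ≠ ⊥ :=
    (Submodule.ne_bot_iff _).mpr ⟨⟨x, hXK hx⟩, Submodule.mem_comap.mpr (by simpa using hx),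
      by simpa using hx0⟩
  have hY' : Y.comap K.subtype ≠ ⊥ :=
    (Submodule.ne_bot_iff _).mpr ⟨⟨y, hYK hy⟩, Submodule.mem_comap.mpr (by simpa using hy),
      by simpa using hy0⟩
  have h3 := h.2 _ _ hX' hY'
  obtain ⟨z, hz, hz0⟩ := (Submodule.ne_bot_iff _).mp h3
  obtain ⟨hz1, hz2⟩ := Submodule.mem_inf.mp hz
  have hmem : (z : M) ∈ X ⊓ Y := Submodule.mem_inf.mpr ⟨hz1, hz2⟩
  rw [hXY, Submodule.mem_bot] at hmem
  exact hz0 (Subtype.ext (by simpa using hmem))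

theorem exists_pair_of_not_uniform {M : Type v} [AddCommGroup M] [Module R M]
    {K : Submodule R M} (hK : K ≠ ⊥) (h : ¬ IsUniformModule R ↥K) :
    ∃ X Y : Submodule R M, X ≤ K ∧ Y ≤ K ∧ X ≠ ⊥ ∧ Y ≠ ⊥ ∧ X ⊓ Y = ⊥ := by
  have hnt : Nontrivial ↥K := Submodule.nontrivial_iff_ne_bot.mpr hK
  have h2 : ¬ ∀ N₁ N₂ : Submodule R ↥K, N₁ ≠ ⊥ → N₂ ≠ ⊥ → N₁ ⊓ N₂ ≠ ⊥ := fun hh => h ⟨hnt, hh⟩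
  push_neg at h2
  obtain ⟨N₁, N₂, h₁, h₂, h₃⟩ := h2
  refine ⟨N₁.map K.subtype, N₂.map K.subtype, Submodule.map_subtype_le K N₁,
    Submodule.map_subtype_le K N₂, ?_, ?_, ?_⟩
  · obtain ⟨z, hz, hz0⟩ := (Submodule.ne_bot_iff N₁).mp h₁
    exact (Submodule.ne_bot_iff _).mpr ⟨(z : M), ⟨z, hz, rfl⟩, by simpa using hz0⟩
  · obtain ⟨z, hz, hz0⟩ := (Submodule.ne_bot_iff N₂).mp h₂
    exact (Submodule.ne_bot_iff _).mpr ⟨(z : M), ⟨z, hz, rfl⟩, by simpa using hz0⟩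
  · rw [eq_bot_iff]
    intro z hz
    obtain ⟨hz1, hz2⟩ := Submodule.mem_inf.mp hz
    obtain ⟨x₁, hx₁, hex₁⟩ := Submodule.mem_map.mp hz1
    obtain ⟨x₂, hx₂, hex₂⟩ := Submodule.mem_map.mp hz2
    have hx12 : x₁ = x₂ := by
      apply Subtype.ext
      have := hex₁.trans hex₂.symm
      simpa using this
    have hm : x₁ ∈ N₁ ⊓ N₂ := Submodule.mem_inf.mpr ⟨hx₁, hx12 ▸ hx₂⟩
    rw [h₃, Submodule.mem_bot] at hm
    rw [Submodule.mem_bot, ← hex₁, hm]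
    simp

theorem moduleZeta_congr : ∀ (α : Ordinal.{v}) (M N : Type v) [AddCommGroup M] [Module R M]
    [AddCommGroup N] [Module R N], ModuleZeta R α M → (M ≃ₗ[R] N) → ModuleZeta R α N := by
  intro α
  induction α using Ordinal.induction with
  | _ α ih =>
    intro M N _ _ _ _ hM e
    rw [moduleZeta_iff] at hM ⊢
    rcases hM with ⟨hα, hu⟩ | ⟨hα, hcond⟩
    · exact Or.inl ⟨hα, hu.congr e⟩
    · refine Or.inr ⟨hα, fun N' hN' hNiso => ?_⟩
      have eK : ↥N' ≃ₗ[R] ↥(N'.map (e.symm : N →ₗ[R] M)) := e.symm.submoduleMap N'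
      have hKbot : N'.map (e.symm : N →ₗ[R] M) ≠ ⊥ := by
        obtain ⟨z, hz, hz0⟩ := (Submodule.ne_bot_iff N').mp hN'
        refine (Submodule.ne_bot_iff _).mpr ⟨e.symm z, ⟨z, hz, rfl⟩, fun h0 => hz0 ?_⟩
        have := congrArg e h0
        simpa using this
      have hKiso : ¬ Nonempty (↥(N'.map (e.symm : N →ₗ[R] M)) ≃ₗ[R] M) := by
        rintro ⟨g⟩
        exact hNiso ⟨(eK.trans g).trans e⟩
      obtain ⟨β, hβ, hζ⟩ := hcond _ hKbot hKiso
      exact ⟨β, hβ, ih β hβ _ _ hζ eK.symm⟩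

theorem moduleZeta_submodule {M : Type v} [AddCommGroup M] [Module R M] {α : Ordinal.{v}}
    (h : ModuleZeta R α M) (N : Submodule R M) (hN : N ≠ ⊥) :
    ∃ β : Ordinal.{v}, ModuleZeta R β ↥N := by
  rw [moduleZeta_iff] at h
  rcases h with ⟨hα, hu⟩ | ⟨hα, hcond⟩
  · exact ⟨1, (moduleZeta_iff 1 ↥N).mpr (Or.inl ⟨rfl, hu.submodule N hN⟩)⟩
  · by_cases hiso : Nonempty (↥N ≃ₗ[R] M)
    · obtain ⟨g⟩ := hiso
      exact ⟨α, moduleZeta_congr α M ↥N ((moduleZeta_iff α M).mpr (Or.inr ⟨hα, hcond⟩)) g.symm⟩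
    · obtain ⟨β, _, hβ⟩ := hcond N hN hiso
      exact ⟨β, hβ⟩

theorem exists_uniform_submodule_of_noetherian (M : Type v) [AddCommGroup M] [Module R M]
    [IsNoetherian R M] (hM : Nontrivial M) :
    ∃ K : Submodule R M, K ≠ ⊥ ∧ IsUniformModule R ↥K := by
  by_contra hcon
  push_neg at hcon
  have split : ∀ K : Submodule R M, ∃ XY : Submodule R M × Submodule R M,
      K ≠ ⊥ → (XY.1 ≤ K ∧ XY.2 ≤ K ∧ XY.1 ≠ ⊥ ∧ XY.2 ≠ ⊥ ∧ XY.1 ⊓ XY.2 = ⊥) := by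
    intro K
    by_cases hK : K = ⊥
    · exact ⟨(⊥, ⊥), fun hne => absurd hK hne⟩
    · obtain ⟨X, Y, h1, h2, h3, h4, h5⟩ := exists_pair_of_not_uniform hK (hcon K hK)
      exact ⟨(X, Y), fun _ => ⟨h1, h2, h3, h4, h5⟩⟩
  choose f hf using split
  let seq : ℕ → Submodule R M × Submodule R M := fun n =>
    Nat.rec (⊥, ⊤) (fun _ p => (p.1 ⊔ (f p.2).1, (f p.2).2)) n
  have hseq : ∀ n : ℕ, seq (n + 1) = ((seq n).1 ⊔ (f (seq n).2).1, (f (seq n).2).2) :=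
    fun n => rfl
  have inv : ∀ n, (seq n).2 ≠ ⊥ ∧ (seq n).1 ⊓ (seq n).2 = ⊥ := by
    intro n
    induction n with
    | zero =>
      constructor
      · show (⊤ : Submodule R M) ≠ ⊥
        obtain ⟨z, hz0⟩ := exists_ne (0 : M)
        exact (Submodule.ne_bot_iff _).mpr ⟨z, Submodule.mem_top, hz0⟩
      · show (⊥ : Submodule R M) ⊓ ⊤ = ⊥
        simp
    | succ n ihn =>
      obtain ⟨hK, hCK⟩ := ihn
      obtain ⟨hX, hY, hX0, hY0, hXY⟩ := hf (seq n).2 hK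
      constructor
      · rw [hseq n]
        exact hY0
      · rw [hseq n]
        rw [eq_bot_iff]
        intro z hz
        obtain ⟨hzl, hzr⟩ := Submodule.mem_inf.mp hz
        obtain ⟨c, hc, x', hx', hcx⟩ := Submodule.mem_sup.mp hzl
        have hzK : z ∈ (seq n).2 := hY hzr
        have hx'K : x' ∈ (seq n).2 := hX hx'
        have hcC : c ∈ (seq n).1 ⊓ (seq n).2 := by
          refine Submodule.mem_inf.mpr ⟨hc, ?_⟩
          have hcz : c = z - x' := by rw [← hcx]; abel
          rw [hcz]
          exact sub_mem hzK hx'K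
        rw [hCK, Submodule.mem_bot] at hcC
        have hzx : z = x' := by rw [← hcx, hcC, zero_add]
        have hm : z ∈ (f (seq n).2).1 ⊓ (f (seq n).2).2 :=
          Submodule.mem_inf.mpr ⟨hzx ▸ hx', hzr⟩
        rw [hXY, Submodule.mem_bot] at hm
        rw [Submodule.mem_bot]
        exact hm
  have hstrict : ∀ n, (seq n).1 < (seq (n + 1)).1 := by
    intro n
    obtain ⟨hK, hCK⟩ := inv n
    obtain ⟨hX, hY, hX0, hY0, hXY⟩ := hf (seq n).2 hK
    rw [hseq n]
    show (seq n).1 < (seq n).1 ⊔ (f (seq n).2).1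
    refine lt_of_le_of_ne le_sup_left (fun heq => ?_)
    obtain ⟨z, hz, hz0⟩ := (Submodule.ne_bot_iff _).mp hX0
    have hzin : z ∈ (seq n).1 ⊔ (f (seq n).2).1 := Submodule.mem_sup_right hz
    rw [← heq] at hzin
    have : z ∈ (seq n).1 ⊓ (seq n).2 := Submodule.mem_inf.mpr ⟨hzin, hX hz⟩
    rw [hCK, Submodule.mem_bot] at this
    exact hz0 this
  obtain ⟨n, hn⟩ := (monotone_stabilizes_iff_noetherian.mpr inferInstance)
    ⟨fun n => (seq n).1, (strictMono_nat_of_lt_succ hstrict).monotone⟩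
  exact absurd (hn (n + 1) (Nat.le_succ n)) (ne_of_lt (hstrict n))

end StmtEighteenAux

/-- If every finitely generated `R`-module has couniserial dimension, then
every nonzero `R`-module contains a noetherian uniform submodule. -/
theorem stmt18 (R : Type u) [Ring R]
    (h : ∀ (M : Type v) [AddCommGroup M] [Module R M], Module.Finite R M → HasCUDim R M) :
    ∀ (M : Type v) [AddCommGroup M] [Module R M], Nontrivial M →
      ∃ N : Submodule R M, N ≠ ⊥ ∧ IsNoetherian R N ∧ IsUniformModule R N := by
  intro M _ _ hM
  by_cases hnoeth : ∃ N : Submodule R M, N ≠ ⊥ ∧ IsNoetherian R ↥N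
  · obtain ⟨N, hN0, hNn⟩ := hnoeth
    haveI := hNn
    haveI hNt : Nontrivial ↥N := Submodule.nontrivial_iff_ne_bot.mpr hN0
    obtain ⟨K, hK0, hKu⟩ := exists_uniform_submodule_of_noetherian (R := R) ↥N hNt
    refine ⟨K.map N.subtype, ?_, ?_, ?_⟩
    · obtain ⟨z, hz, hz0⟩ := (Submodule.ne_bot_iff K).mp hK0
      exact (Submodule.ne_bot_iff _).mpr ⟨(z : M), ⟨z, hz, rfl⟩, by simpa using hz0⟩
    · exact isNoetherian_of_linearEquiv
        (Submodule.equivMapOfInjective N.subtype N.injective_subtype K)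
    · exact hKu.congr (Submodule.equivMapOfInjective N.subtype N.injective_subtype K)
  · push_neg at hnoeth
    exfalso
    -- Part I : find a uniform submodule
    obtain ⟨x, hx0⟩ := exists_ne (0 : M)
    have hU₀fg : (Submodule.span R {x}).FG := Submodule.fg_span_singleton x
    haveI : Module.Finite R ↥(Submodule.span R {x}) := Module.Finite.iff_fg.mpr hU₀fg
    have hU₀0 : Submodule.span R {x} ≠ ⊥ := by
      rw [Ne, Submodule.span_singleton_eq_bot]; exact hx0
    obtain ⟨θ₀, hθ₀⟩ := h ↥(Submodule.span R {x}) inferInstance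
    set Sig1 : Set Ordinal.{v} := {β | ∃ N : Submodule R M, N ≠ ⊥ ∧ N ≤ Submodule.span R {x} ∧
      ModuleZeta R β ↥N} with hSig1def
    have hSig1ne : Sig1.Nonempty := ⟨θ₀, Submodule.span R {x}, hU₀0, le_refl _, hθ₀⟩
    have hαmem := Ordinal.lt_wf.min_mem Sig1 hSig1ne
    set α := Ordinal.lt_wf.min Sig1 hSig1ne with hαdef
    have hαmin : ∀ β ∈ Sig1, ¬ β < α := fun β hβ => Ordinal.lt_wf.not_lt_min Sig1 hβ
    obtain ⟨U, hU0, hUle, hUζ⟩ := hαmem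
    rw [moduleZeta_iff] at hUζ
    rcases hUζ with ⟨hα1, hUu⟩ | ⟨hα1, hUcond⟩
    · -- α = 1 : U is uniform.  Part II.
      clear hα1 hαmin hUle
      haveI hUnt : Nontrivial ↥U := Submodule.nontrivial_iff_ne_bot.mpr hU0
      obtain ⟨u₁, hu₁0⟩ := exists_ne (0 : ↥U)
      have hK₁0 : (Submodule.span R {u₁} : Submodule R ↥U) ≠ ⊥ := by
        rw [Ne, Submodule.span_singleton_eq_bot]; exact hu₁0
      have hK₁u : IsUniformModule R ↥(Submodule.span R {u₁} : Submodule R ↥U) :=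
        hUu.submodule _ hK₁0
      set U₁ : Submodule R M := (Submodule.span R {u₁} : Submodule R ↥U).map U.subtype
        with hU₁def
      have eU₁ : ↥(Submodule.span R {u₁} : Submodule R ↥U) ≃ₗ[R] ↥U₁ :=
        Submodule.equivMapOfInjective U.subtype U.injective_subtype _
      have hU₁u : IsUniformModule R ↥U₁ := hK₁u.congr eU₁
      have hU₁0 : U₁ ≠ ⊥ := by
        obtain ⟨z, hz, hz0⟩ := (Submodule.ne_bot_iff _).mp hK₁0
        exact (Submodule.ne_bot_iff _).mpr ⟨(z : M), ⟨z, hz, rfl⟩, by simpa using hz0⟩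
      have hU₁fg : U₁.FG := Submodule.FG.map _ (Submodule.fg_span_singleton u₁)
      haveI hV : Module.Finite R ↥U₁ := Module.Finite.iff_fg.mpr hU₁fg
      haveI : Nontrivial ↥U₁ := hU₁u.1
      obtain ⟨v, hv0⟩ := exists_ne (0 : ↥U₁)
      obtain ⟨θ, hθ⟩ := h (↥U₁ × ↥U₁) inferInstance
      -- every nonzero submodule of U₁ × U₁ contains a nonzero submodule embedding into U₁
      have hEmb : ∀ C : Submodule R (↥U₁ × ↥U₁), C ≠ ⊥ →
          ∃ C' : Submodule R (↥U₁ × ↥U₁), C' ≤ C ∧ C' ≠ ⊥ ∧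
            ∃ j : ↥C' →ₗ[R] ↥U₁, Function.Injective j := by
        intro C hC
        by_cases hC1 : C ⊓ (Submodule.prod ⊤ ⊥) = ⊥
        · refine ⟨C, le_refl C, hC, (LinearMap.snd R ↥U₁ ↥U₁).comp C.subtype, ?_⟩
          intro z w hzw
          have h2 : (z : ↥U₁ × ↥U₁).2 = (w : ↥U₁ × ↥U₁).2 := hzw
          have hzww : ((z : ↥U₁ × ↥U₁) - (w : ↥U₁ × ↥U₁)) ∈ C ⊓ (Submodule.prod ⊤ ⊥) := by
            refine Submodule.mem_inf.mpr ⟨sub_mem z.2 w.2, Submodule.mem_prod.mpr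
              ⟨Submodule.mem_top, ?_⟩⟩
            rw [Submodule.mem_bot]
            show (z : ↥U₁ × ↥U₁).2 - (w : ↥U₁ × ↥U₁).2 = 0
            rw [h2, sub_self]
          rw [hC1, Submodule.mem_bot] at hzww
          exact Subtype.ext (sub_eq_zero.mp hzww)
        · refine ⟨C ⊓ (Submodule.prod ⊤ ⊥), inf_le_left, hC1,
            (LinearMap.fst R ↥U₁ ↥U₁).comp (C ⊓ (Submodule.prod ⊤ ⊥)).subtype, ?_⟩
          intro z w hzw
          have h1 : (z : ↥U₁ × ↥U₁).1 = (w : ↥U₁ × ↥U₁).1 := hzw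
          have hz2 : (z : ↥U₁ × ↥U₁).2 = 0 :=
            (Submodule.mem_bot R).mp (Submodule.mem_prod.mp (Submodule.mem_inf.mp z.2).2).2
          have hw2 : (w : ↥U₁ × ↥U₁).2 = 0 :=
            (Submodule.mem_bot R).mp (Submodule.mem_prod.mp (Submodule.mem_inf.mp w.2).2).2
          exact Subtype.ext (Prod.ext h1 (hz2.trans hw2.symm))
      -- every nonzero submodule of U₁ × U₁ contains a non-f.g. submodule
      have hNonFG : ∀ C : Submodule R (↥U₁ × ↥U₁), C ≠ ⊥ →
          ∃ D : Submodule R (↥U₁ × ↥U₁), D ≤ C ∧ ¬ D.FG := by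
        intro C hC
        obtain ⟨C', hC'le, hC'0, j, hj⟩ := hEmb C hC
        have hι : Function.Injective ⇑(U₁.subtype.comp j) := by
          rw [LinearMap.coe_comp]
          exact U₁.injective_subtype.comp hj
        have hrange0 : LinearMap.range (U₁.subtype.comp j) ≠ ⊥ := by
          haveI : Nontrivial ↥C' := Submodule.nontrivial_iff_ne_bot.mpr hC'0
          obtain ⟨c, hc0⟩ := exists_ne (0 : ↥C')
          refine (Submodule.ne_bot_iff _).mpr ⟨(U₁.subtype.comp j) c, ⟨c, rfl⟩,
            fun h0 => hc0 (hι ?_)⟩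
          rw [h0, map_zero]
        have hnn : ¬ IsNoetherian R ↥C' := by
          intro hn
          haveI := hn
          exact hnoeth _ hrange0
            (isNoetherian_of_linearEquiv (LinearEquiv.ofInjective (U₁.subtype.comp j) hι))
        rw [isNoetherian_def] at hnn
        push_neg at hnn
        obtain ⟨G₀, hG₀⟩ := hnn
        exact ⟨G₀.map C'.subtype, le_trans (Submodule.map_subtype_le C' G₀) hC'le,
          fun hfg => hG₀ (Submodule.fg_of_fg_map_injective C'.subtype C'.injective_subtype hfg)⟩
      -- minimize couniserial dimension over nonzero non-uniform submodules of U₁ × U₁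
      have hP0 : (⊤ : Submodule R (↥U₁ × ↥U₁)) ≠ ⊥ :=
        (Submodule.ne_bot_iff _).mpr ⟨(v, 0), Submodule.mem_top,
          fun h0 => hv0 (congrArg Prod.fst h0)⟩
      have hPnu : ¬ IsUniformModule R ↥(⊤ : Submodule R (↥U₁ × ↥U₁)) := by
        refine not_uniform_of_pair (X := Submodule.prod ⊤ ⊥) (Y := Submodule.prod ⊥ ⊤)
          le_top le_top ?_ ?_ ?_
        · exact (Submodule.ne_bot_iff _).mpr ⟨(v, 0), Submodule.mem_prod.mpr
            ⟨Submodule.mem_top, (Submodule.mem_bot R).mpr rfl⟩, fun h0 => hv0 (congrArg Prod.fst h0)⟩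
        · exact (Submodule.ne_bot_iff _).mpr ⟨(0, v), Submodule.mem_prod.mpr
            ⟨(Submodule.mem_bot R).mpr rfl, Submodule.mem_top⟩, fun h0 => hv0 (congrArg Prod.snd h0)⟩
        · rw [eq_bot_iff]
          intro z hz
          obtain ⟨hz1, hz2⟩ := Submodule.mem_inf.mp hz
          have h1 := (Submodule.mem_bot R).mp (Submodule.mem_prod.mp hz1).2
          have h2 := (Submodule.mem_bot R).mp (Submodule.mem_prod.mp hz2).1
          rw [Submodule.mem_bot]
          exact Prod.ext h2 h1
      set Sig2 : Set Ordinal.{v} := {β | ∃ W : Submodule R (↥U₁ × ↥U₁),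
        (W ≠ ⊥ ∧ ¬ IsUniformModule R ↥W) ∧ ModuleZeta R β ↥W} with hSig2def
      have hSig2ne : Sig2.Nonempty := by
        obtain ⟨β, hβ⟩ := moduleZeta_submodule hθ ⊤ hP0
        exact ⟨β, ⊤, ⟨hP0, hPnu⟩, hβ⟩
      have hδmem := Ordinal.lt_wf.min_mem Sig2 hSig2ne
      set δ := Ordinal.lt_wf.min Sig2 hSig2ne with hδdef
      have hδmin : ∀ β ∈ Sig2, ¬ β < δ := fun β hβ => Ordinal.lt_wf.not_lt_min Sig2 hβ
      obtain ⟨W, ⟨hW0, hWnu⟩, hWζ⟩ := hδmem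
      rw [moduleZeta_iff] at hWζ
      rcases hWζ with ⟨hδ1, hWu⟩ | ⟨hδ1, hWcond⟩
      · exact hWnu hWu
      · -- every nonzero non-uniform submodule of W is isomorphic to W
        have hdag : ∀ S : Submodule R (↥U₁ × ↥U₁), S ≤ W → S ≠ ⊥ →
            ¬ IsUniformModule R ↥S → Nonempty (↥S ≃ₗ[R] ↥W) := by
          intro S hSW hS0 hSnu
          have eS : ↥(S.comap W.subtype) ≃ₗ[R] ↥S := Submodule.comapSubtypeEquivOfLe hSW
          have hScomap0 : S.comap W.subtype ≠ ⊥ := by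
            obtain ⟨s, hs, hs0⟩ := (Submodule.ne_bot_iff S).mp hS0
            exact (Submodule.ne_bot_iff _).mpr ⟨⟨s, hSW hs⟩,
              Submodule.mem_comap.mpr (by simpa using hs), by simpa using hs0⟩
          by_cases hiso : Nonempty (↥(S.comap W.subtype) ≃ₗ[R] ↥W)
          · obtain ⟨g⟩ := hiso
            exact ⟨eS.symm.trans g⟩
          · obtain ⟨β, hβ, hζ⟩ := hWcond _ hScomap0 hiso
            exact absurd hβ (hδmin β ⟨S, ⟨hS0, hSnu⟩, moduleZeta_congr β _ _ hζ eS⟩)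
        obtain ⟨A, B, hAW, hBW, hA0, hB0, hAB⟩ := exists_pair_of_not_uniform hW0 hWnu
        obtain ⟨D, hDA, hDnfg⟩ := hNonFG A hA0
        have hD0 : D ≠ ⊥ := fun hD => hDnfg (hD ▸ Submodule.fg_bot)
        obtain ⟨a, ha, ha0⟩ := (Submodule.ne_bot_iff D).mp hD0
        obtain ⟨b, hb, hb0⟩ := (Submodule.ne_bot_iff B).mp hB0
        have hsa : Submodule.span R {a} ≤ D := (Submodule.span_singleton_le_iff_mem a D).mpr ha
        have hsb : Submodule.span R {b} ≤ B := (Submodule.span_singleton_le_iff_mem b B).mpr hb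
        have hsa0 : (Submodule.span R {a} : Submodule R (↥U₁ × ↥U₁)) ≠ ⊥ := by
          rw [Ne, Submodule.span_singleton_eq_bot]; exact ha0
        have hsb0 : (Submodule.span R {b} : Submodule R (↥U₁ × ↥U₁)) ≠ ⊥ := by
          rw [Ne, Submodule.span_singleton_eq_bot]; exact hb0
        have hsab : Submodule.span R {a} ⊓ Submodule.span R {b} = ⊥ := by
          have h' : Submodule.span R {a} ⊓ Submodule.span R {b} ≤ A ⊓ B :=
            inf_le_inf (hsa.trans hDA) hsb
          rw [hAB, le_bot_iff] at h'
          exact h'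
        -- the 2-generated submodule span{a} ⊔ span{b} is isomorphic to W, so W is f.g.
        have hS₁W : Submodule.span R {a} ⊔ Submodule.span R {b} ≤ W :=
          sup_le ((hsa.trans hDA).trans hAW) (hsb.trans hBW)
        have hS₁0 : (Submodule.span R {a} ⊔ Submodule.span R {b} :
            Submodule R (↥U₁ × ↥U₁)) ≠ ⊥ := by
          intro hbot
          apply hsa0
          rw [← le_bot_iff, ← hbot]
          exact le_sup_left
        have hS₁nu : ¬ IsUniformModule R ↥(Submodule.span R {a} ⊔ Submodule.span R {b} :
            Submodule R (↥U₁ × ↥U₁)) :=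
          not_uniform_of_pair le_sup_left le_sup_right hsa0 hsb0 hsab
        obtain ⟨eS₁⟩ := hdag _ hS₁W hS₁0 hS₁nu
        haveI : Module.Finite R ↥(Submodule.span R {a} ⊔ Submodule.span R {b} :
            Submodule R (↥U₁ × ↥U₁)) :=
          Module.Finite.iff_fg.mpr ((Submodule.fg_span_singleton a).sup
            (Submodule.fg_span_singleton b))
        haveI hWfin : Module.Finite R ↥W := Module.Finite.equiv eS₁
        -- the submodule D ⊔ span{b} is isomorphic to W, hence f.g.; so D is f.g., contradiction
        have hDb : D ⊓ Submodule.span R {b} = ⊥ := by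
          have h' : D ⊓ Submodule.span R {b} ≤ A ⊓ B := inf_le_inf hDA hsb
          rw [hAB, le_bot_iff] at h'
          exact h'
        have hTW : D ⊔ Submodule.span R {b} ≤ W := sup_le (hDA.trans hAW) (hsb.trans hBW)
        have hT0 : (D ⊔ Submodule.span R {b} : Submodule R (↥U₁ × ↥U₁)) ≠ ⊥ := by
          intro hbot
          apply hD0
          rw [← le_bot_iff, ← hbot]
          exact le_sup_left
        have hTnu : ¬ IsUniformModule R ↥(D ⊔ Submodule.span R {b} :
            Submodule R (↥U₁ × ↥U₁)) :=
          not_uniform_of_pair le_sup_left le_sup_right hD0 hsb0 hDb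
        obtain ⟨eT⟩ := hdag _ hTW hT0 hTnu
        haveI hTfin : Module.Finite R ↥(D ⊔ Submodule.span R {b} :
            Submodule R (↥U₁ × ↥U₁)) := Module.Finite.equiv eT.symm
        -- split off D
        have hf₂s : Function.Surjective
            ((Submodule.inclusion (le_sup_left : D ≤ D ⊔ Submodule.span R {b})).coprod
              (Submodule.inclusion (le_sup_right : Submodule.span R {b} ≤ D ⊔
                Submodule.span R {b}))) := by
          rintro ⟨t, ht⟩
          obtain ⟨y, hy, z, hz, hyz⟩ := Submodule.mem_sup.mp ht
          exact ⟨(⟨y, hy⟩, ⟨z, hz⟩), Subtype.ext hyz⟩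
        have hf₂i : Function.Injective
            ((Submodule.inclusion (le_sup_left : D ≤ D ⊔ Submodule.span R {b})).coprod
              (Submodule.inclusion (le_sup_right : Submodule.span R {b} ≤ D ⊔
                Submodule.span R {b}))) := by
          rintro ⟨y, z⟩ ⟨y', z'⟩ hyz
          have hval : (y : ↥U₁ × ↥U₁) + (z : ↥U₁ × ↥U₁) =
              (y' : ↥U₁ × ↥U₁) + (z' : ↥U₁ × ↥U₁) := congrArg Subtype.val hyz
          have hsub : (y : ↥U₁ × ↥U₁) - (y' : ↥U₁ × ↥U₁) =
              (z' : ↥U₁ × ↥U₁) - (z : ↥U₁ × ↥U₁) := by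
            rw [sub_eq_sub_iff_add_eq_add]
            exact hval.trans (add_comm _ _)
          have hmem : (y : ↥U₁ × ↥U₁) - (y' : ↥U₁ × ↥U₁) ∈ D ⊓ Submodule.span R {b} :=
            Submodule.mem_inf.mpr ⟨sub_mem y.2 y'.2, hsub ▸ sub_mem z'.2 z.2⟩
          rw [hDb, Submodule.mem_bot, sub_eq_zero] at hmem
          have hy : y = y' := Subtype.ext hmem
          have hz : z = z' := by
            apply Subtype.ext
            have := hval
            rw [hmem] at this
            exact add_left_cancel this
          rw [hy, hz]
        haveI : Module.Finite R (↥D × ↥(Submodule.span R {b} : Submodule R (↥U₁ × ↥U₁))) :=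
          Module.Finite.equiv (LinearEquiv.ofBijective _ ⟨hf₂i, hf₂s⟩).symm
        haveI : Module.Finite R ↥D :=
          Module.Finite.of_surjective
            (LinearMap.fst R ↥D ↥(Submodule.span R {b} : Submodule R (↥U₁ × ↥U₁)))
            (fun d => ⟨(d, 0), rfl⟩)
        exact hDnfg (Module.Finite.iff_fg.mp ‹Module.Finite R ↥D›)
    · -- 1 < α : every nonzero submodule of U is isomorphic to U, so U is noetherian
      have hiso : ∀ N : Submodule R ↥U, N ≠ ⊥ → Nonempty (↥N ≃ₗ[R] ↥U) := by
        intro N hN0'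
        by_contra hno
        obtain ⟨β, hβ, hζ⟩ := hUcond N hN0' hno
        have hmem : β ∈ Sig1 := by
          refine ⟨N.map U.subtype, ?_, le_trans (Submodule.map_subtype_le U N) hUle,
            moduleZeta_congr β ↥N _ hζ
              (Submodule.equivMapOfInjective U.subtype U.injective_subtype N)⟩
          obtain ⟨y, hy, hy0⟩ := (Submodule.ne_bot_iff N).mp hN0'
          exact (Submodule.ne_bot_iff _).mpr ⟨(y : M), ⟨y, hy, rfl⟩, by simpa using hy0⟩
        exact hαmin β hmem hβ
      haveI hUnt : Nontrivial ↥U := Submodule.nontrivial_iff_ne_bot.mpr hU0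
      obtain ⟨u, hu0⟩ := exists_ne (0 : ↥U)
      have hsp : (Submodule.span R {u} : Submodule R ↥U) ≠ ⊥ := by
        rw [Ne, Submodule.span_singleton_eq_bot]; exact hu0
      obtain ⟨g⟩ := hiso _ hsp
      haveI : Module.Finite R ↥(Submodule.span R {u} : Submodule R ↥U) :=
        Module.Finite.iff_fg.mpr (Submodule.fg_span_singleton u)
      haveI hUfin : Module.Finite R ↥U := Module.Finite.equiv g
      have hnoe : IsNoetherian R ↥U := by
        rw [isNoetherian_def]
        intro s
        by_cases hs : s = ⊥
        · rw [hs]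
          exact Submodule.fg_bot
        · obtain ⟨gs⟩ := hiso s hs
          haveI : Module.Finite R ↥s := Module.Finite.equiv gs.symm
          exact Module.Finite.iff_fg.mp ‹Module.Finite R ↥s›
      exact hnoeth U hU0 hnoe
end
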